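/- arXiv:2304.11927 — 6 statements merged into one kernel-verified Lean document; each statement's English description precedes it below -/
import Mathlib

section
/- Let ω be a Thiele function with Δω(i) > 0 for all integers i ≥ 0, let G = (N, A) be a graph, and let κ ≥ 0 and t be integers with 1 ≤ t ≤ |A|. Construct: candidates C = {p} ∪ {c(e) : e ∈ A} with p fresh; for each vertex u ∈ N, the vote v(u) = {c(e) : e ∈ A incident to u}; committee size k = t; and a tie-breaking linear order ⊳ on C in which p is first. Then there exists S ⊆ N with |S| ≤ κ covering at least t edges of G if and only if there exists S ⊆ N with |S| ≤ κ such that p is not contained in the seqω winning t-committee of (C, {v(u) : u ∈ S}) with respect to ⊳. -/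
open Finset

attribute [local instance] Classical.propDecidable

universe u

variable {α : Type u}

/-- The Thiele ω-score of a committee `w` in the election with votes `V`. -/
noncomputable def thieleScore [DecidableEq α] (ω : ℕ → ℝ) (V : Multiset (Finset α))
    (w : Finset α) : ℝ :=
  (V.map fun v => ω (v ∩ w).card).sum

/-- The ω margin contribution of candidate `c` to committee `w`. -/
noncomputable def marginContrib [DecidableEq α] (ω : ℕ → ℝ) (V : Multiset (Finset α))
    (w : Finset α) (c : α) : ℝ :=
  thieleScore ω V (insert c w) - thieleScore ω V w

/-- Candidates of `C \ w` whose ω margin contribution to `w` is maximum. -/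
noncomputable def maxMarginSet [DecidableEq α] (ω : ℕ → ℝ) (V : Multiset (Finset α))
    (C w : Finset α) : Finset α :=
  (C \ w).filter fun c => ∀ c' ∈ C \ w, marginContrib ω V w c' ≤ marginContrib ω V w c

/-- Among the maximizers, the candidate(s) earliest in the tie-breaking order `pri`
(the order with `a ⊳ b` iff `pri a < pri b`). -/
noncomputable def seqNext [DecidableEq α] (ω : ℕ → ℝ) (pri : α → ℕ) (V : Multiset (Finset α))
    (C w : Finset α) : Finset α :=
  (maxMarginSet ω V C w).filter fun c => ∀ c' ∈ maxMarginSet ω V C w, pri c ≤ pri c'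

/-- The winning `k`-committee of the sequential ω-Thiele rule with tie-breaking order `pri`:
starting from `∅`, repeatedly add the candidate with maximum ω margin contribution,
breaking ties in favor of the candidate earliest in the order. -/
noncomputable def seqCommittee [DecidableEq α] (ω : ℕ → ℝ) (pri : α → ℕ)
    (V : Multiset (Finset α)) (C : Finset α) : ℕ → Finset α
  | 0 => ∅
  | k + 1 => seqCommittee ω pri V C k ∪ seqNext ω pri V C (seqCommittee ω pri V C k)

/-- The AV score of a committee. -/
noncomputable def avScore [DecidableEq α] (V : Multiset (Finset α)) (w : Finset α) : ℕ :=
  (V.map fun v => (v ∩ w).card).sum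

/-- AV winning `k`-committees: the `k`-subsets of `C` of maximum AV score. -/
noncomputable def avWinners [DecidableEq α] (C : Finset α) (V : Multiset (Finset α)) (k : ℕ) :
    Finset (Finset α) :=
  (C.powersetCard k).filter fun w => ∀ w' ∈ C.powersetCard k, avScore V w' ≤ avScore V w

/-- The SAV score of a committee. -/
noncomputable def savScore [DecidableEq α] (V : Multiset (Finset α)) (w : Finset α) : ℝ :=
  (V.map fun v => ((w ∩ v).card : ℝ) / (v.card : ℝ)).sum

/-- SAV winning `k`-committees: the `k`-subsets of `C` of maximum SAV score. -/
noncomputable def savWinners [DecidableEq α] (C : Finset α) (V : Multiset (Finset α)) (k : ℕ) :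
    Finset (Finset α) :=
  (C.powersetCard k).filter fun w => ∀ w' ∈ C.powersetCard k, savScore V w' ≤ savScore V w

/-- The NSAV score of a committee (with respect to candidate set `C`). -/
noncomputable def nsavScore [DecidableEq α] (C : Finset α) (V : Multiset (Finset α))
    (w : Finset α) : ℝ :=
  (V.map fun v => ((w ∩ v).card : ℝ) / (v.card : ℝ)).sum
    - (V.map fun v => ((w \ v).card : ℝ) / ((C \ v).card : ℝ)).sum

/-- The PAV score of a committee. -/
noncomputable def pavScore [DecidableEq α] (V : Multiset (Finset α)) (w : Finset α) : ℝ :=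
  (V.map fun v => ∑ i ∈ Finset.range (v ∩ w).card, (1 : ℝ) / (i + 1)).sum

/-- PAV winning `k`-committees: the `k`-subsets of `C` of maximum PAV score. -/
noncomputable def pavWinners [DecidableEq α] (C : Finset α) (V : Multiset (Finset α)) (k : ℕ) :
    Finset (Finset α) :=
  (C.powersetCard k).filter fun w => ∀ w' ∈ C.powersetCard k, pavScore V w' ≤ pavScore V w

/-- The ABCCV score of a committee: the number of votes approving at least one member. -/
noncomputable def abccvScore [DecidableEq α] (V : Multiset (Finset α)) (w : Finset α) : ℕ :=
  Multiset.card (V.filter fun v => (v ∩ w).Nonempty)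

/-- ABCCV winning `k`-committees: the `k`-subsets of `C` of maximum ABCCV score. -/
noncomputable def abccvWinners [DecidableEq α] (C : Finset α) (V : Multiset (Finset α)) (k : ℕ) :
    Finset (Finset α) :=
  (C.powersetCard k).filter fun w => ∀ w' ∈ C.powersetCard k, abccvScore V w' ≤ abccvScore V w

/-- The MAV score of a committee: the maximum Hamming distance to a vote. -/
noncomputable def mavScore [DecidableEq α] (V : Multiset (Finset α)) (w : Finset α) : ℕ :=
  (V.map fun v => (w \ v).card + (v \ w).card).sup

/-- MAV winning `k`-committees: the `k`-subsets of `C` of minimum MAV score. -/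
noncomputable def mavWinners [DecidableEq α] (C : Finset α) (V : Multiset (Finset α)) (k : ℕ) :
    Finset (Finset α) :=
  (C.powersetCard k).filter fun w => ∀ w' ∈ C.powersetCard k, mavScore V w ≤ mavScore V w'

namespace Stmt12

variable {β : Type u} [DecidableEq β]

/-- Candidate type: one candidate `c(e)` per edge `e`, or the distinguished candidate `p`. -/
abbrev Cand (β : Type u) := Finset β ⊕ Unit

/-- The distinguished candidate `p`. -/
def pc : Cand β := Sum.inr ()

/-- The candidate set `C = {p} ∪ {c(e) : e ∈ A}`. -/
def Ctot (Aed : Finset (Finset β)) : Finset (Cand β) := insert pc (Aed.image Sum.inl)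

/-- The vote `v(u)` of a vertex `u`, approving all candidates of edges incident to `u`. -/
def vVote (Aed : Finset (Finset β)) (u : β) : Finset (Cand β) :=
  (Aed.filter fun e => u ∈ e).image Sum.inl

section MyAux

variable [DecidableEq α]

lemma my_thieleScore_map {γ : Type u} (ω : ℕ → ℝ) (s : Finset γ) (f : γ → Finset α)
    (w : Finset α) : thieleScore ω (s.val.map f) w = ∑ u ∈ s, ω ((f u ∩ w).card) := by
  simp only [thieleScore, Multiset.map_map]
  rfl

lemma my_marginContrib_map {γ : Type u} (ω : ℕ → ℝ) (s : Finset γ) (f : γ → Finset α)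
    (w : Finset α) (c : α) :
    marginContrib ω (s.val.map f) w c
      = ∑ u ∈ s, (ω ((f u ∩ insert c w).card) - ω ((f u ∩ w).card)) := by
  simp [marginContrib, my_thieleScore_map, Finset.sum_sub_distrib]

lemma my_inter_insert_notMem (v w : Finset α) (c : α) (h : c ∉ v) :
    v ∩ insert c w = v ∩ w := by
  ext x
  simp only [Finset.mem_inter, Finset.mem_insert]
  constructor
  · rintro ⟨hx, rfl | hx'⟩
    · exact absurd hx h
    · exact ⟨hx, hx'⟩
  · rintro ⟨hx, hx'⟩; exact ⟨hx, Or.inr hx'⟩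

lemma my_inter_insert_mem (v w : Finset α) (c : α) (hv : c ∈ v) (hw : c ∉ w) :
    (v ∩ insert c w).card = (v ∩ w).card + 1 := by
  have h1 : v ∩ insert c w = insert c (v ∩ w) := by
    ext x
    simp only [Finset.mem_inter, Finset.mem_insert]
    constructor
    · rintro ⟨hx, rfl | hx'⟩
      · exact Or.inl rfl
      · exact Or.inr ⟨hx, hx'⟩
    · rintro (rfl | ⟨hx, hx'⟩)
      · exact ⟨hv, Or.inl rfl⟩
      · exact ⟨hx, Or.inr hx'⟩
  rw [h1, Finset.card_insert_of_notMem (fun h => hw (Finset.mem_inter.mp h).2)]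

lemma my_inter_card_le (v w : Finset α) (c : α) :
    (v ∩ w).card ≤ (v ∩ insert c w).card :=
  Finset.card_le_card (Finset.inter_subset_inter (Finset.Subset.refl v)
    (Finset.subset_insert c w))

end MyAux

namespace Stmt12Aux

variable {β : Type u} [DecidableEq β]

open Stmt12

/-- Key pointwise lemma: for any voter set `S`, `p` avoids the seq-Thiele `t`-committee
iff `S` covers at least `t` edges. -/
lemma key (ω : ℕ → ℝ) (hmono : ∀ i, ω i ≤ ω (i + 1))
    (hΔ : ∀ i : ℕ, 0 < ω (i + 1) - ω i)
    (Aed : Finset (Finset β)) (t : ℕ)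
    (pri : Cand β → ℕ) (hinj : Set.InjOn pri (Ctot Aed : Set (Cand β)))
    (hpri : ∀ c ∈ Ctot Aed, c ≠ pc → pri pc < pri c) (S : Finset β) :
    t ≤ (Aed.filter fun e => (e ∩ S).Nonempty).card ↔
      pc ∉ seqCommittee ω pri (S.val.map (vVote Aed)) (Ctot Aed) t := by
  classical
  set V : Multiset (Finset (Cand β)) := S.val.map (vVote Aed) with hV
  set C : Finset (Cand β) := Ctot Aed with hC
  set Cov : Finset (Cand β) :=
    (Aed.filter fun e => (e ∩ S).Nonempty).image (Sum.inl : Finset β → Cand β) with hCov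
  set W : ℕ → Finset (Cand β) := seqCommittee ω pri V C with hW
  have hM : Monotone ω := monotone_nat_of_le_succ hmono
  have hWsucc : ∀ i, W (i + 1) = W i ∪ seqNext ω pri V C (W i) := fun i => rfl
  have hW0 : W 0 = ∅ := rfl
  have hpcC : pc ∈ C := Finset.mem_insert_self _ _
  have hCovC : Cov ⊆ C := fun x hx =>
    Finset.mem_insert_of_mem (Finset.image_subset_image (Finset.filter_subset _ _) hx)
  have hCovcard : Cov.card = (Aed.filter fun e => (e ∩ S).Nonempty).card :=
    Finset.card_image_of_injective _ Sum.inl_injective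
  have hmemCov : ∀ e : Finset β, Sum.inl e ∈ Cov ↔ e ∈ Aed ∧ (e ∩ S).Nonempty := by
    intro e
    simp [hCov, Finset.mem_image, Finset.mem_filter, Sum.inl.injEq]
  -- margin of a candidate approved by no vote is 0
  have margin_zero : ∀ (w : Finset (Cand β)) (c : Cand β),
      (∀ u ∈ S, c ∉ vVote Aed u) → marginContrib ω V w c = 0 := by
    intro w c h
    rw [hV, my_marginContrib_map]
    apply Finset.sum_eq_zero
    intro u hu
    rw [my_inter_insert_notMem _ _ _ (h u hu)]
    ring
  have margin_pc : ∀ w : Finset (Cand β), marginContrib ω V w pc = 0 := by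
    intro w
    apply margin_zero
    intro u _
    simp [vVote, pc]
  have margin_nonneg : ∀ (w : Finset (Cand β)) (c : Cand β),
      0 ≤ marginContrib ω V w c := by
    intro w c
    rw [hV, my_marginContrib_map]
    apply Finset.sum_nonneg
    intro u _
    have := hM (my_inter_card_le (vVote Aed u) w c)
    linarith
  have margin_notCov : ∀ (w : Finset (Cand β)) (c : Cand β), c ∈ C → c ∉ Cov → c ≠ pc →
      marginContrib ω V w c = 0 := by
    intro w c hcC hcCov hcne
    rcases Finset.mem_insert.mp hcC with h | h
    · exact absurd h hcne
    · obtain ⟨e, he, rfl⟩ := Finset.mem_image.mp h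
      apply margin_zero
      intro u hu hmem
      obtain ⟨e', he', heq⟩ := Finset.mem_image.mp hmem
      have hee : e' = e := Sum.inl_injective heq
      exact hcCov ((hmemCov e).mpr ⟨he, ⟨u, Finset.mem_inter.mpr
        ⟨hee ▸ (Finset.mem_filter.mp he').2, hu⟩⟩⟩)
  have margin_cov : ∀ (w : Finset (Cand β)) (c : Cand β), c ∈ Cov → c ∉ w →
      0 < marginContrib ω V w c := by
    intro w c hcCov hcw
    obtain ⟨e, he, rfl⟩ := Finset.mem_image.mp hcCov
    obtain ⟨heA, u, hu⟩ : e ∈ Aed ∧ ∃ u, u ∈ e ∩ S := by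
      have := Finset.mem_filter.mp he
      exact ⟨this.1, this.2⟩
    rw [hV, my_marginContrib_map]
    apply Finset.sum_pos'
    · intro u' _
      have := hM (my_inter_card_le (vVote Aed u') w (Sum.inl e))
      linarith
    · refine ⟨u, (Finset.mem_inter.mp hu).2, ?_⟩
      have hmem : Sum.inl e ∈ vVote Aed u :=
        Finset.mem_image_of_mem _ (Finset.mem_filter.mpr ⟨heA, (Finset.mem_inter.mp hu).1⟩)
      rw [my_inter_insert_mem _ _ _ hmem hcw]
      have := hΔ ((vVote Aed u ∩ w).card)
      linarith
  -- seqNext has at most one element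
  have seqNext_card : ∀ w : Finset (Cand β), (seqNext ω pri V C w).card ≤ 1 := by
    intro w
    apply Finset.card_le_one.mpr
    intro a ha b hb
    have ha' := Finset.mem_filter.mp ha
    have hb' := Finset.mem_filter.mp hb
    have haC : a ∈ C := (Finset.mem_sdiff.mp (Finset.mem_filter.mp ha'.1).1).1
    have hbC : b ∈ C := (Finset.mem_sdiff.mp (Finset.mem_filter.mp hb'.1).1).1
    exact hinj haC hbC (le_antisymm (ha'.2 b hb'.1) (hb'.2 a ha'.1))
  have seqNext_nonempty : ∀ w : Finset (Cand β), pc ∉ w →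
      (seqNext ω pri V C w).Nonempty := by
    intro w hpc
    have h1 : (C \ w).Nonempty := ⟨pc, Finset.mem_sdiff.mpr ⟨hpcC, hpc⟩⟩
    obtain ⟨c, hc, hmax⟩ := Finset.exists_max_image (C \ w) (marginContrib ω V w) h1
    have hcM : c ∈ maxMarginSet ω V C w := Finset.mem_filter.mpr ⟨hc, hmax⟩
    obtain ⟨d, hd, hmin⟩ := Finset.exists_min_image (maxMarginSet ω V C w) pri ⟨c, hcM⟩
    exact ⟨d, Finset.mem_filter.mpr ⟨hd, hmin⟩⟩
  have pc_not_next : ∀ w : Finset (Cand β), (∃ c ∈ Cov, c ∉ w) →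
      pc ∉ seqNext ω pri V C w := by
    rintro w ⟨c, hcCov, hcw⟩ hmem
    have hpcM := (Finset.mem_filter.mp hmem).1
    have hmax := (Finset.mem_filter.mp hpcM).2
    have hcCw : c ∈ C \ w := Finset.mem_sdiff.mpr ⟨hCovC hcCov, hcw⟩
    have h1 := hmax c hcCw
    have h2 := margin_cov w c hcCov hcw
    rw [margin_pc] at h1
    linarith
  -- growth lemma: while pc is out, the committee consists of covered candidates
  have grow : ∀ i, pc ∉ W i → W i ⊆ Cov ∧ (W i).card = i := by
    intro i
    induction i with
    | zero => intro _; simp [hW0]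
    | succ i ih =>
      intro hpc1
      rw [hWsucc] at hpc1
      have hpc0 : pc ∉ W i := fun h => hpc1 (Finset.mem_union_left _ h)
      obtain ⟨hsub, hcard⟩ := ih hpc0
      obtain ⟨c₀, hc₀⟩ := seqNext_nonempty (W i) hpc0
      have hsn : seqNext ω pri V C (W i) = {c₀} :=
        Finset.eq_singleton_iff_unique_mem.mpr
          ⟨hc₀, fun x hx => Finset.card_le_one.mp (seqNext_card _) x hx c₀ hc₀⟩
      have hc₀M : c₀ ∈ maxMarginSet ω V C (W i) := (Finset.mem_filter.mp hc₀).1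
      have hc₀Cw : c₀ ∈ C \ W i := (Finset.mem_filter.mp hc₀M).1
      have hc₀C : c₀ ∈ C := (Finset.mem_sdiff.mp hc₀Cw).1
      have hc₀nw : c₀ ∉ W i := (Finset.mem_sdiff.mp hc₀Cw).2
      have hc₀ne : c₀ ≠ pc := by
        rintro rfl
        exact hpc1 (Finset.mem_union_right _ hc₀)
      have hc₀Cov : c₀ ∈ Cov := by
        by_contra hno
        have h0 : marginContrib ω V (W i) c₀ = 0 := margin_notCov _ _ hc₀C hno hc₀ne
        have hpcmax : pc ∈ maxMarginSet ω V C (W i) := by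
          refine Finset.mem_filter.mpr ⟨Finset.mem_sdiff.mpr ⟨hpcC, hpc0⟩, ?_⟩
          intro c' hc'
          rw [margin_pc]
          have := (Finset.mem_filter.mp hc₀M).2 c' hc'
          linarith
        have hle := (Finset.mem_filter.mp hc₀).2 pc hpcmax
        exact absurd hle (not_le.mpr (hpri c₀ hc₀C hc₀ne))
      have heq : W (i + 1) = insert c₀ (W i) := by
        rw [hWsucc, hsn, Finset.insert_eq, Finset.union_comm]
      constructor
      · rw [heq]
        exact Finset.insert_subset hc₀Cov hsub
      · rw [heq, Finset.card_insert_of_notMem hc₀nw, hcard]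
  constructor
  · -- many covered edges ⇒ pc excluded
    intro hcov
    have ht' : t ≤ Cov.card := by rw [hCovcard]; exact hcov
    have safe : ∀ i, i ≤ t → pc ∉ W i ∧ (W i).card ≤ i := by
      intro i
      induction i with
      | zero => intro _; simp [hW0]
      | succ i ih =>
        intro hit
        obtain ⟨hpc0, hcard⟩ := ih (Nat.le_of_succ_le hit)
        have hex : ∃ c ∈ Cov, c ∉ W i := by
          by_contra h'
          push_neg at h'
          have : Cov ⊆ W i := fun c hc => h' c hc
          have h1 : t ≤ i := le_trans ht' (le_trans (Finset.card_le_card this) hcard)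
          omega
        constructor
        · rw [hWsucc]
          intro hmem
          rcases Finset.mem_union.mp hmem with h | h
          · exact hpc0 h
          · exact pc_not_next (W i) hex h
        · rw [hWsucc]
          calc (W i ∪ seqNext ω pri V C (W i)).card
              ≤ (W i).card + (seqNext ω pri V C (W i)).card := Finset.card_union_le _ _
            _ ≤ i + 1 := add_le_add hcard (seqNext_card _)
    exact (safe t le_rfl).1
  · -- pc excluded ⇒ many covered edges
    intro hpc
    obtain ⟨hsub, hcard⟩ := grow t hpc
    rw [← hCovcard, ← hcard]
    exact Finset.card_le_card hsub

end Stmt12Aux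

/-- correctness of the reduction from Maximum Partial Vertex Cover to
destructive control by adding voters for sequential ω-Thiele rules with `Δω(i) > 0`
for all `i ≥ 0`. -/
theorem dcav_seq_thiele (ω : ℕ → ℝ) (hω0 : ω 0 = 0) (hmono : ∀ i, ω i ≤ ω (i + 1))
    (hΔ : ∀ i : ℕ, 0 < ω (i + 1) - ω i)
    (N : Finset β) (Aed : Finset (Finset β))
    (hedge : ∀ e ∈ Aed, e.card = 2 ∧ e ⊆ N)
    (κ t : ℕ) (ht1 : 1 ≤ t) (ht2 : t ≤ Aed.card)
    (pri : Cand β → ℕ) (hinj : Set.InjOn pri (Ctot Aed : Set (Cand β)))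
    (hpri : ∀ c ∈ Ctot Aed, c ≠ pc → pri pc < pri c) :
    (∃ S ⊆ N, S.card ≤ κ ∧ t ≤ (Aed.filter fun e => (e ∩ S).Nonempty).card) ↔
      (∃ S ⊆ N, S.card ≤ κ ∧
        pc ∉ seqCommittee ω pri (S.val.map (vVote Aed)) (Ctot Aed) t) := by
  constructor
  · rintro ⟨S, hSN, hSκ, hcov⟩
    exact ⟨S, hSN, hSκ, (Stmt12Aux.key ω hmono hΔ Aed t pri hinj hpri S).mp hcov⟩
  · rintro ⟨S, hSN, hSκ, hpc⟩
    exact ⟨S, hSN, hSκ, (Stmt12Aux.key ω hmono hΔ Aed t pri hinj hpri S).mpr hpc⟩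

end Stmt12
end

section
/- Let φ be an AV-uniform ABMV rule, let G = (N, A) be a graph, and let κ be an integer with 2 ≤ κ ≤ |N|. Construct: candidates C = N ∪ {p, p'} with p, p' fresh; registered votes V: κ − 2 copies of the vote {p, p'}; and, for each edge {u, u'} ∈ A, one unregistered vote v(u, u') = {u, u'}. Then G has a clique of size κ if and only if there exists a set U' of at most κ(κ−1)/2 unregistered votes such that p is not contained in any winning κ-committee of φ at (C, V ∪ U'). -/
open Finset

attribute [local instance] Classical.propDecidable

universe u

variable {α : Type u}

lemma avScore_add [DecidableEq α] (m : ℕ) (v : Finset α) (U : Finset (Finset α)) (w : Finset α) :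
    avScore (Multiset.replicate m v + U.val) w = m * (v ∩ w).card + ∑ e ∈ U, (e ∩ w).card := by
  rw [avScore, Multiset.map_add, Multiset.sum_add, Multiset.map_replicate,
    Multiset.sum_replicate, smul_eq_mul]
  rfl

lemma double_count [DecidableEq α] (U : Finset (Finset α)) (w : Finset α) :
    ∑ e ∈ U, (e ∩ w).card = ∑ x ∈ w, (U.filter fun e => x ∈ e).card := by
  simp only [Finset.card_filter]
  rw [Finset.sum_comm]
  congr 1
  ext e
  rw [← Finset.filter_mem_eq_inter]
  simp [Finset.card_filter, inter_comm]

lemma sum_inter_erase [DecidableEq α] (U : Finset (Finset α)) {w : Finset α} {x : α}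
    (hx : x ∈ w) :
    ∑ e ∈ U, (e ∩ w).card
      = ∑ e ∈ U, (e ∩ w.erase x).card + (U.filter fun e => x ∈ e).card := by
  rw [double_count, double_count]
  exact (Finset.sum_erase_add _ _ hx).symm

lemma deg_le [DecidableEq α] {S : Finset α} {U : Finset (Finset α)}
    (hU : ∀ e ∈ U, e.card = 2 ∧ e ⊆ S) (x : α) :
    (U.filter fun e => x ∈ e).card ≤ S.card - 1 := by
  by_cases hx : x ∈ S
  · calc (U.filter fun e => x ∈ e).card
        ≤ ((S.erase x).image fun y => ({x, y} : Finset α)).card := by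
          apply Finset.card_le_card
          intro e he
          rw [Finset.mem_filter] at he
          obtain ⟨heU, hxe⟩ := he
          obtain ⟨hc2, heS⟩ := hU e heU
          obtain ⟨a, b, hab, rfl⟩ := Finset.card_eq_two.mp hc2
          rw [Finset.mem_image]
          rcases Finset.mem_insert.mp hxe with rfl | hb
          · exact ⟨b, Finset.mem_erase.mpr ⟨fun h => hab h.symm,
              heS (by simp)⟩, rfl⟩
          · rw [Finset.mem_singleton] at hb
            subst hb
            exact ⟨a, Finset.mem_erase.mpr ⟨fun h => hab h,
              heS (by simp)⟩, by rw [Finset.pair_comm]⟩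
      _ ≤ (S.erase x).card := Finset.card_image_le
      _ = S.card - 1 := Finset.card_erase_of_mem hx
  · have h0 : U.filter (fun e => x ∈ e) = ∅ := by
      rw [Finset.filter_eq_empty_iff]
      exact fun {e} he hxe => hx ((hU e he).2 hxe)
    simp [h0]

lemma arith1 {k t : ℕ} (hk : 2 ≤ k) (ht1 : 1 ≤ t) (ht2 : t ≤ 2) :
    (k - 2) * t + (k - t) * (k - 1) < k * (k - 1) := by
  obtain ⟨m, rfl⟩ : ∃ m, k = m + 2 := ⟨k - 2, by omega⟩
  interval_cases t <;> · simp only [Nat.add_sub_cancel, show m+2-1 = m+1 from rfl] <;> nlinarith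

/-- correctness of the reduction from Clique to destructive control by
adding voters for every AV-uniform ABMV rule.  Vertices of the graph are candidates;
edges are the 2-element subsets in `Aed`. -/
theorem dcav_av_uniform {γ : Type u} [DecidableEq γ]
    (φ : Finset γ → Multiset (Finset γ) → ℕ → Finset (Finset γ))
    (huniform : ∀ (C : Finset γ) (V : Multiset (Finset γ)) (k : ℕ), k ≤ C.card →
      (∀ v ∈ V, v ⊆ C) → (∃ s, ∀ v ∈ V, v.card = s) →
      φ C V k = avWinners C V k)
    (N : Finset γ) (Aed : Finset (Finset γ))
    (hedge : ∀ e ∈ Aed, e.card = 2 ∧ e ⊆ N)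
    (κ : ℕ) (hκ1 : 2 ≤ κ) (hκ2 : κ ≤ N.card)
    (p p' : γ) (hp : p ∉ N) (hp' : p' ∉ N) (hpp' : p ≠ p') :
    (∃ S ⊆ N, S.card = κ ∧ ∀ u ∈ S, ∀ u' ∈ S, u ≠ u' → ({u, u'} : Finset γ) ∈ Aed) ↔
      (∃ U' ⊆ Aed, U'.card ≤ κ * (κ - 1) / 2 ∧
        ∀ w ∈ φ (N ∪ {p, p'})
            (Multiset.replicate (κ - 2) ({p, p'} : Finset γ) + U'.val) κ, p ∉ w) := by
  set C := N ∪ ({p, p'} : Finset γ) with hC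
  have hpC : p ∈ C := mem_union_right _ (mem_insert_self _ _)
  have hp'C : p' ∈ C := mem_union_right _ (by simp)
  have hdisj : Disjoint N ({p, p'} : Finset γ) := by
    rw [Finset.disjoint_right]
    intro x hx
    rcases mem_insert.mp hx with rfl | hx
    · exact hp
    · rw [mem_singleton] at hx; subst hx; exact hp'
  have hCcard : C.card = N.card + 2 := by
    rw [hC, card_union_of_disjoint hdisj, card_pair hpp']
  have hκC : κ ≤ C.card := by omega
  have hφ : ∀ U' ⊆ Aed,
      φ C (Multiset.replicate (κ - 2) ({p, p'} : Finset γ) + U'.val) κ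
        = avWinners C (Multiset.replicate (κ - 2) ({p, p'} : Finset γ) + U'.val) κ := by
    intro U' hU'
    apply huniform _ _ _ hκC
    · intro v hv
      rcases Multiset.mem_add.mp hv with hv | hv
      · rw [Multiset.eq_of_mem_replicate hv]
        exact subset_union_right
      · exact ((hedge v (hU' hv)).2).trans subset_union_left
    · refine ⟨2, fun v hv => ?_⟩
      rcases Multiset.mem_add.mp hv with hv | hv
      · rw [Multiset.eq_of_mem_replicate hv]; exact card_pair hpp'
      · exact (hedge v (hU' hv)).1
  have heven' : ∃ t, κ * (κ - 1) = 2 * t := by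
    obtain ⟨m, rfl⟩ : ∃ m, κ = m + 2 := ⟨κ - 2, by omega⟩
    obtain ⟨r, hr⟩ := Nat.even_mul_succ_self (m + 1)
    refine ⟨r, ?_⟩
    have hr2 : (m + 2) * (m + 2 - 1) = r + r := by
      rw [show m + 2 - 1 = m + 1 from by omega, ← hr]; ring
    omega
  constructor
  · rintro ⟨S, hSN, hScard, hclq⟩
    set U' : Finset (Finset γ) := Aed.filter (fun e => e ⊆ S) with hU'def
    have hU'A : U' ⊆ Aed := filter_subset _ _
    have hU'eq : U' = S.powersetCard 2 := by
      ext e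
      simp only [hU'def, mem_filter, mem_powersetCard]
      constructor
      · rintro ⟨heA, heS⟩; exact ⟨heS, (hedge e heA).1⟩
      · rintro ⟨heS, hc2⟩
        obtain ⟨a, b, hab, rfl⟩ := card_eq_two.mp hc2
        exact ⟨hclq a (heS (by simp)) b (heS (by simp)) hab, heS⟩
    have hU'card : U'.card = κ * (κ - 1) / 2 := by
      rw [hU'eq, card_powersetCard, hScard, Nat.choose_two_right]
    have h2U' : 2 * U'.card = κ * (κ - 1) := by
      obtain ⟨t, ht⟩ := heven'
      rw [hU'card, ht]; omega
    refine ⟨U', hU'A, le_of_eq hU'card, ?_⟩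
    rw [hφ U' hU'A]
    intro w hw hpw
    rw [avWinners, mem_filter] at hw
    obtain ⟨hwP, hwmax⟩ := hw
    obtain ⟨hwC, hwcard⟩ := mem_powersetCard.mp hwP
    have hSP : S ∈ C.powersetCard κ :=
      mem_powersetCard.mpr ⟨hSN.trans subset_union_left, hScard⟩
    have hSle := hwmax S hSP
    have hpS : p ∉ S := fun h => hp (hSN h)
    have hp'S : p' ∉ S := fun h => hp' (hSN h)
    -- score of S
    have hscoreS : avScore (Multiset.replicate (κ - 2) ({p, p'} : Finset γ) + U'.val) S
        = κ * (κ - 1) := by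
      rw [avScore_add]
      have h1 : ({p, p'} : Finset γ) ∩ S = ∅ := by
        rw [eq_empty_iff_forall_notMem]
        intro y hy
        rcases mem_inter.mp hy with ⟨hy1, hy2⟩
        rcases mem_insert.mp hy1 with rfl | hy1
        · exact hpS hy2
        · rw [mem_singleton] at hy1; subst hy1; exact hp'S hy2
      rw [h1]
      have h2 : ∀ e ∈ U', (e ∩ S).card = 2 := by
        intro e he
        rw [inter_eq_left.mpr (mem_filter.mp he).2]
        exact (hedge e (hU'A he)).1
      rw [Finset.sum_congr rfl h2, Finset.sum_const, smul_eq_mul]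
      simp [mul_comm, h2U']
    -- score of w
    have hdeg : ∀ x, (U'.filter fun e => x ∈ e).card ≤ κ - 1 := by
      intro x
      have := deg_le (S := S) (U := U')
        (fun e he => ⟨(hedge e (hU'A he)).1, (mem_filter.mp he).2⟩) x
      rwa [hScard] at this
    have hdeg0 : ∀ x ∈ ({p, p'} : Finset γ), (U'.filter fun e => x ∈ e).card = 0 := by
      intro x hx
      rw [card_eq_zero, Finset.filter_eq_empty_iff]
      intro e he hxe
      have hxN : x ∈ N := (hedge e (hU'A he)).2 hxe
      exact (Finset.disjoint_left.mp hdisj hxN) hx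
    set t := (({p, p'} : Finset γ) ∩ w).card with htdef
    have ht1 : 1 ≤ t := card_pos.mpr ⟨p, mem_inter.mpr ⟨mem_insert_self _ _, hpw⟩⟩
    have ht2 : t ≤ 2 := by
      calc t ≤ ({p, p'} : Finset γ).card := card_le_card inter_subset_left
        _ = 2 := card_pair hpp'
    have hsdcard : (w \ ({p, p'} : Finset γ)).card = κ - t := by
      have := Finset.card_sdiff_add_card_inter w ({p, p'} : Finset γ)
      rw [inter_comm] at this
      omega
    have hsumw : ∑ e ∈ U', (e ∩ w).card ≤ (κ - t) * (κ - 1) := by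
      rw [double_count]
      have hsub : ∑ x ∈ w, (U'.filter fun e => x ∈ e).card
          = ∑ x ∈ w \ ({p, p'} : Finset γ), (U'.filter fun e => x ∈ e).card := by
        refine (Finset.sum_subset sdiff_subset fun x hxw hxn => ?_).symm
        have : x ∈ ({p, p'} : Finset γ) := by
          by_contra hxp
          exact hxn (mem_sdiff.mpr ⟨hxw, hxp⟩)
        exact hdeg0 x this
      rw [hsub]
      calc ∑ x ∈ w \ ({p, p'} : Finset γ), (U'.filter fun e => x ∈ e).card
          ≤ ∑ _x ∈ w \ ({p, p'} : Finset γ), (κ - 1) :=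
            Finset.sum_le_sum fun x _ => hdeg x
        _ = (κ - t) * (κ - 1) := by rw [Finset.sum_const, smul_eq_mul, hsdcard]
    have hscorew : avScore (Multiset.replicate (κ - 2) ({p, p'} : Finset γ) + U'.val) w
        < κ * (κ - 1) := by
      rw [avScore_add, ← htdef]
      calc (κ - 2) * t + ∑ e ∈ U', (e ∩ w).card
          ≤ (κ - 2) * t + (κ - t) * (κ - 1) := by omega
        _ < κ * (κ - 1) := arith1 hκ1 ht1 ht2
    rw [hscoreS] at hSle
    omega
  · rintro ⟨U', hU'A, hU'card, hwin⟩
    rw [hφ U' hU'A] at hwin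
    set V := Multiset.replicate (κ - 2) ({p, p'} : Finset γ) + U'.val with hV
    obtain ⟨w0, hw0sub, hw0card⟩ := Finset.exists_subset_card_eq hκC
    have hne : (C.powersetCard κ).Nonempty := ⟨w0, mem_powersetCard.mpr ⟨hw0sub, hw0card⟩⟩
    obtain ⟨w, hwP, hmax⟩ := Finset.exists_max_image (C.powersetCard κ) (avScore V) hne
    have hwW : w ∈ avWinners C V κ := mem_filter.mpr ⟨hwP, hmax⟩
    have hpw : p ∉ w := hwin w hwW
    obtain ⟨hwC, hwcard⟩ := mem_powersetCard.mp hwP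
    have hedgeU : ∀ e ∈ U', p ∉ e ∧ p' ∉ e := by
      intro e he
      exact ⟨fun h => hp ((hedge e (hU'A he)).2 h), fun h => hp' ((hedge e (hU'A he)).2 h)⟩
    have hp'w : p' ∉ w := by
      intro hp'w
      set w2 := insert p (w.erase p') with hw2
      have hpnotin : p ∉ w.erase p' := fun h => hpw (erase_subset _ _ h)
      have hw2P : w2 ∈ C.powersetCard κ := by
        refine mem_powersetCard.mpr ⟨insert_subset hpC ((erase_subset _ _).trans hwC), ?_⟩
        rw [hw2, card_insert_of_notMem hpnotin, card_erase_of_mem hp'w, hwcard]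
        omega
      have hsc : avScore V w2 = avScore V w := by
        rw [hV, avScore_add, avScore_add]
        congr 1
        · have h1 : ({p, p'} : Finset γ) ∩ w2 = {p} := by
            ext y
            simp only [hw2, mem_inter, mem_insert, mem_singleton, mem_erase]
            constructor
            · rintro ⟨rfl | rfl, h⟩
              · rfl
              · rcases h with rfl | ⟨h1, _⟩
                · exact absurd rfl hpp'.symm
                · exact absurd rfl h1
            · rintro rfl
              exact ⟨Or.inl rfl, Or.inl rfl⟩
          have h2 : ({p, p'} : Finset γ) ∩ w = {p'} := by
            ext y
            simp only [mem_inter, mem_insert, mem_singleton]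
            constructor
            · rintro ⟨rfl | rfl, h⟩
              · exact absurd h hpw
              · rfl
            · rintro rfl
              exact ⟨Or.inr rfl, hp'w⟩
          rw [h1, h2]; simp
        · refine Finset.sum_congr rfl fun e he => ?_
          congr 1
          ext y
          obtain ⟨hpe, hp'e⟩ := hedgeU e he
          simp only [hw2, mem_inter, mem_insert, mem_erase]
          constructor
          · rintro ⟨hy, rfl | ⟨_, hy2⟩⟩
            · exact absurd hy hpe
            · exact ⟨hy, hy2⟩
          · rintro ⟨hy, hy2⟩
            exact ⟨hy, Or.inr ⟨fun h => hp'e (h ▸ hy), hy2⟩⟩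
      have hw2W : w2 ∈ avWinners C V κ :=
        mem_filter.mpr ⟨hw2P, fun w' hw' => le_of_le_of_eq (hmax w' hw') hsc.symm⟩
      exact hwin w2 hw2W (mem_insert_self p _)
    have hwN : w ⊆ N := by
      intro x hx
      rcases mem_union.mp (hwC hx) with h | h
      · exact h
      · rcases mem_insert.mp h with rfl | h
        · exact absurd hx hpw
        · rw [mem_singleton] at h; subst h; exact absurd hx hp'w
    have hpairw : ({p, p'} : Finset γ) ∩ w = ∅ := by
      rw [eq_empty_iff_forall_notMem]
      intro y hy
      rcases mem_inter.mp hy with ⟨hy1, hy2⟩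
      rcases mem_insert.mp hy1 with rfl | hy1
      · exact hpw hy2
      · rw [mem_singleton] at hy1; subst hy1; exact hp'w hy2
    have hdegw : ∀ x ∈ w, κ - 1 ≤ (U'.filter fun e => x ∈ e).card := by
      intro x hx
      set w2 := insert p (w.erase x) with hw2
      have hpnotin : p ∉ w.erase x := fun h => hpw (erase_subset _ _ h)
      have hw2P : w2 ∈ C.powersetCard κ := by
        refine mem_powersetCard.mpr ⟨insert_subset hpC ((erase_subset _ _).trans hwC), ?_⟩
        rw [hw2, card_insert_of_notMem hpnotin, card_erase_of_mem hx, hwcard]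
        omega
      have hlt : avScore V w2 < avScore V w := by
        by_contra hle
        push_neg at hle
        have hw2W : w2 ∈ avWinners C V κ :=
          mem_filter.mpr ⟨hw2P, fun w' hw' => (hmax w' hw').trans hle⟩
        exact hwin w2 hw2W (mem_insert_self p _)
      have hpair2 : ({p, p'} : Finset γ) ∩ w2 = {p} := by
        ext y
        simp only [hw2, mem_inter, mem_insert, mem_singleton, mem_erase]
        constructor
        · rintro ⟨rfl | rfl, h⟩
          · rfl
          · rcases h with rfl | ⟨_, h2⟩
            · exact absurd rfl hpp'.symm
            · exact absurd h2 hp'w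
        · rintro rfl
          exact ⟨Or.inl rfl, Or.inl rfl⟩
      rw [hV, avScore_add, avScore_add, hpairw, hpair2] at hlt
      simp only [card_singleton, card_empty, mul_one, mul_zero, zero_add] at hlt
      have hsum2 : ∑ e ∈ U', (e ∩ w2).card = ∑ e ∈ U', (e ∩ w.erase x).card := by
        refine Finset.sum_congr rfl fun e he => ?_
        congr 1
        ext y
        obtain ⟨hpe, _⟩ := hedgeU e he
        simp only [hw2, mem_inter, mem_insert]
        constructor
        · rintro ⟨hy, rfl | hy2⟩
          · exact absurd hy hpe
          · exact ⟨hy, hy2⟩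
        · rintro ⟨hy, hy2⟩
          exact ⟨hy, Or.inr hy2⟩
      rw [hsum2] at hlt
      have hsplit := sum_inter_erase U' hx
      omega
    -- counting
    have hsum1 : κ * (κ - 1) ≤ ∑ e ∈ U', (e ∩ w).card := by
      rw [double_count]
      calc κ * (κ - 1) = ∑ _x ∈ w, (κ - 1) := by
            rw [Finset.sum_const, smul_eq_mul, hwcard]
        _ ≤ ∑ x ∈ w, (U'.filter fun e => x ∈ e).card := Finset.sum_le_sum hdegw
    have hsum2 : ∑ e ∈ U', (e ∩ w).card ≤ ∑ e ∈ U', e.card :=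
      Finset.sum_le_sum fun e _ => card_le_card inter_subset_left
    have hsum3 : ∑ e ∈ U', e.card = 2 * U'.card := by
      rw [Finset.sum_congr rfl fun e he => (hedge e (hU'A he)).1, Finset.sum_const,
        smul_eq_mul, mul_comm]
    have h2U : 2 * U'.card ≤ κ * (κ - 1) := by
      obtain ⟨t, ht⟩ := heven'
      omega
    have hesub : ∀ e ∈ U', e ⊆ w := by
      intro e he
      by_contra hns
      have hlt : (e ∩ w).card < e.card := by
        apply card_lt_card
        rw [Finset.ssubset_def]
        exact ⟨inter_subset_left, fun h => hns (h.trans inter_subset_right)⟩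
      have hlt2 : ∑ e ∈ U', (e ∩ w).card < ∑ e ∈ U', e.card :=
        Finset.sum_lt_sum (fun i (_ : i ∈ U') => card_le_card inter_subset_left)
          ⟨e, he, hlt⟩
      omega
    have hU'sub : U' ⊆ w.powersetCard 2 := fun e he =>
      mem_powersetCard.mpr ⟨hesub e he, (hedge e (hU'A he)).1⟩
    have hUeq : U' = w.powersetCard 2 := by
      apply Finset.eq_of_subset_of_card_le hU'sub
      rw [card_powersetCard, hwcard, Nat.choose_two_right]
      obtain ⟨t, ht⟩ := heven'
      omega
    refine ⟨w, hwN, hwcard, fun u hu u' hu' huu' => ?_⟩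
    have : ({u, u'} : Finset γ) ∈ w.powersetCard 2 :=
      mem_powersetCard.mpr ⟨insert_subset hu (singleton_subset_iff.mpr hu'), card_pair huu'⟩
    exact hU'A (hUeq ▸ this)
end

section
/- Let φ be an AV-uniform ABMV rule. Let G = (R ∪ B, E) be a bipartite graph with no isolated vertices and R ≠ ∅, let d = max_{b∈B} deg_G(b) and d' = max_{r∈R} deg_G(r), and let κ ≥ 1 be an integer with |R| ≤ κ(d+1) and |B| ≥ κ + d'. Write |R| = κ'(d+1) + t for the unique integers κ' ≥ 0 and 0 ≤ t ≤ d. Construct the election with candidates: c(r) for each r ∈ R; a set X of d+1−t fresh candidates; for each b ∈ B, a set C(b) of d − deg_G(b) fresh candidates; and a fresh candidate p; and partition C(R) ∪ X into κ'+1 blocks X_1, …, X_{κ'+1} of d+1 candidates each, where C(S) = {c(u) : u ∈ S}. Votes V: for each i ∈ {1, …, κ'+1}, κ copies of the vote X_i; and for each b ∈ B, one vote v(b) = {p} ∪ C(N_G(b)) ∪ C(b) (which has exactly d+1 members). Let k = |R|. Then there exists B' ⊆ B with |B'| = κ dominating R if and only if there exists a submultiset V' ⊆ V with |V'| ≤ |B|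 − κ such that p is not contained in any winning k-committee of φ at (C, V ∖ V'). -/
open Finset

attribute [local instance] Classical.propDecidable

universe u

variable {α : Type u}

universe v

section AuxAV

/-- `cnt P M` counts elements of `M` satisfying `P`, with a fixed classical instance. -/
noncomputable def cnt {α : Type u} (P : α → Prop) (M : Multiset α) : ℕ :=
  @Multiset.countP α P (fun a => Classical.propDecidable (P a)) M

lemma cnt_zero {α : Type u} (P : α → Prop) : cnt P 0 = 0 := rfl

lemma cnt_cons {α : Type u} (P : α → Prop) (a : α) (s : Multiset α) :
    cnt P (a ::ₘ s) = cnt P s + if P a then 1 else 0 :=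
  Multiset.countP_cons _ _ _

lemma cnt_add {α : Type u} (P : α → Prop) (s t : Multiset α) :
    cnt P (s + t) = cnt P s + cnt P t := by
  simp only [cnt, Multiset.countP_add]

lemma cnt_eq_zero {α : Type u} {P : α → Prop} {s : Multiset α} :
    cnt P s = 0 ↔ ∀ a ∈ s, ¬P a :=
  Multiset.countP_eq_zero

lemma cnt_pos {α : Type u} {P : α → Prop} {s : Multiset α} :
    0 < cnt P s ↔ ∃ a ∈ s, P a :=
  Multiset.countP_pos

lemma cnt_le_card {α : Type u} (P : α → Prop) (s : Multiset α) :
    cnt P s ≤ Multiset.card s :=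
  Multiset.countP_le_card _ _

lemma cnt_le_of_le {α : Type u} (P : α → Prop) {s t : Multiset α} (h : s ≤ t) :
    cnt P s ≤ cnt P t :=
  Multiset.countP_le_of_le _ h

lemma cnt_sub {α : Type u} [DecidableEq α] (P : α → Prop) {s t : Multiset α} (h : t ≤ s) :
    cnt P (s - t) = cnt P s - cnt P t := by
  simp only [cnt]
  exact Multiset.countP_sub (p := P) h

lemma cnt_congr {α : Type u} {P Q : α → Prop} {s : Multiset α}
    (h : ∀ a ∈ s, P a ↔ Q a) : cnt P s = cnt Q s :=
  Multiset.countP_congr rfl (fun a ha => propext (h a ha))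

lemma cnt_map {α : Type u} {γ : Type v} (f : γ → α) (s : Multiset γ) (P : α → Prop) :
    cnt P (s.map f) = cnt (fun a => P (f a)) s := by
  simp only [cnt]
  rw [Multiset.countP_map, ← Multiset.countP_eq_card_filter]

lemma cnt_singleton {α : Type u} (P : α → Prop) (a : α) :
    cnt P {a} = if P a then 1 else 0 := by
  rw [← Multiset.cons_zero, cnt_cons, cnt_zero, zero_add]

lemma cnt_eq_card_filter {α : Type u} (Q : α → Prop) [DecidablePred Q] (s : Multiset α) :
    cnt Q s = Multiset.card (Multiset.filter Q s) := by
  induction s using Multiset.induction_on with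
  | empty => simp [cnt]
  | cons a s ih =>
    rw [cnt_cons, Multiset.filter_cons, ih]
    by_cases h : Q a <;> simp [h]

lemma cnt_filter {α : Type u} (P Q : α → Prop) [DecidablePred Q] (s : Multiset α) :
    cnt P (Multiset.filter Q s) = cnt (fun a => P a ∧ Q a) s := by
  induction s using Multiset.induction_on with
  | empty => simp [cnt]
  | cons a s ih =>
    rw [Multiset.filter_cons, cnt_add, cnt_cons, ← ih]
    by_cases h : Q a
    · rw [if_pos h, cnt_singleton]
      by_cases hP : P a <;> simp [hP, h] <;> omega
    · rw [if_neg h, cnt_zero, zero_add]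
      simp [h]

lemma cnt_mono_pred {α : Type u} {P Q : α → Prop} (s : Multiset α)
    (h : ∀ a ∈ s, P a → Q a) : cnt P s ≤ cnt Q s := by
  induction s using Multiset.induction_on with
  | empty => simp [cnt]
  | cons a s ih =>
    rw [cnt_cons, cnt_cons]
    have h2 := ih (fun a ha => h a (Multiset.mem_cons_of_mem ha))
    by_cases hP : P a
    · rw [if_pos hP, if_pos (h a (Multiset.mem_cons_self a s) hP)]
      omega
    · rw [if_neg hP]
      split <;> omega

lemma cnt_split {α : Type u} (P Q : α → Prop) (M : Multiset α) :
    cnt P M = cnt (fun a => P a ∧ Q a) M + cnt (fun a => P a ∧ ¬Q a) M := by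
  induction M using Multiset.induction_on with
  | empty => simp [cnt]
  | cons a s ih =>
    rw [cnt_cons, cnt_cons, cnt_cons, ih]
    by_cases hP : P a <;> by_cases hQ : Q a <;>
      simp [hP, hQ] <;> omega

lemma cnt_replicate {α : Type u} (P : α → Prop) (n : ℕ) (x : α) [Decidable (P x)] :
    cnt P (Multiset.replicate n x) = if P x then n else 0 := by
  induction n with
  | zero => by_cases h : P x <;> simp [cnt, h]
  | succ n ih =>
    rw [Multiset.replicate_succ, cnt_cons, ih]
    by_cases h : P x <;> simp [h]

lemma cnt_bind {α : Type u} {γ : Type v} (P : α → Prop) (s : Multiset γ) (f : γ → Multiset α) :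
    cnt P (s.bind f) = (s.map fun a => cnt P (f a)).sum := by
  induction s using Multiset.induction_on with
  | empty => simp [cnt]
  | cons a s ih => simp only [Multiset.cons_bind, cnt_add, ih, Multiset.map_cons,
      Multiset.sum_cons]

lemma cnt_map_val {α : Type u} {γ : Type v} [DecidableEq γ] (f : γ → α) (B0 : Finset γ)
    (P : α → Prop) [DecidablePred (fun b => P (f b))] :
    cnt P (B0.val.map f) = (B0.filter fun b => P (f b)).card := by
  rw [cnt_map, cnt_eq_card_filter]
  rfl

variable [DecidableEq α]

lemma avScore_eq_sum (V : Multiset (Finset α)) (w : Finset α) :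
    avScore V w = ∑ c ∈ w, cnt (fun v => c ∈ v) V := by
  induction V using Multiset.induction_on with
  | empty => simp [avScore, cnt]
  | cons a V ih =>
    simp only [avScore, Multiset.map_cons, Multiset.sum_cons] at *
    rw [ih]
    simp only [cnt_cons, Finset.sum_add_distrib]
    rw [add_comm]
    congr 1
    rw [Finset.inter_comm, ← Finset.filter_mem_eq_inter, Finset.card_filter]
    exact Finset.sum_congr rfl fun c _ => by by_cases h : c ∈ a <;> simp [h]

lemma avWinners_nonempty {C : Finset α} {V : Multiset (Finset α)} {k : ℕ} (h : k ≤ C.card) :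
    (avWinners C V k).Nonempty := by
  obtain ⟨w, hw, hmax⟩ := Finset.exists_max_image (C.powersetCard k) (avScore V)
    (Finset.powersetCard_nonempty.2 h)
  exact ⟨w, Finset.mem_filter.2 ⟨hw, hmax⟩⟩

lemma swap_score {V : Multiset (Finset α)} {w : Finset α} {x y : α}
    (hx : x ∈ w) (hyw : y ∉ w) :
    avScore V (insert y (w.erase x)) + cnt (fun v => x ∈ v) V
      = avScore V w + cnt (fun v => y ∈ v) V := by
  rw [avScore_eq_sum, avScore_eq_sum,
    Finset.sum_insert (fun hy => hyw (Finset.mem_of_mem_erase hy))]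
  have h2 : ∑ c ∈ w.erase x, cnt (fun v => c ∈ v) V + cnt (fun v => x ∈ v) V
      = ∑ c ∈ w, cnt (fun v => c ∈ v) V := Finset.sum_erase_add w _ hx
  omega

lemma swap_mem_powersetCard {C w : Finset α} {k : ℕ} {x y : α}
    (hw : w ∈ C.powersetCard k) (hx : x ∈ w) (hy : y ∈ C) (hyw : y ∉ w) :
    insert y (w.erase x) ∈ C.powersetCard k := by
  rw [Finset.mem_powersetCard] at hw ⊢
  constructor
  · exact Finset.insert_subset hy ((Finset.erase_subset _ _).trans hw.1)
  · rw [Finset.card_insert_of_notMem (fun hy => hyw (Finset.mem_of_mem_erase hy)),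
      Finset.card_erase_of_mem hx, hw.2]
    have : 1 ≤ k := hw.2 ▸ Finset.card_pos.2 ⟨x, hx⟩
    omega

lemma swap_mem_winners {C : Finset α} {V : Multiset (Finset α)} {k : ℕ} {w : Finset α} {x y : α}
    (hw : w ∈ avWinners C V k) (hx : x ∈ w) (hy : y ∈ C) (hyw : y ∉ w)
    (h : cnt (fun v => x ∈ v) V ≤ cnt (fun v => y ∈ v) V) :
    insert y (w.erase x) ∈ avWinners C V k := by
  rw [avWinners, Finset.mem_filter] at hw ⊢
  refine ⟨swap_mem_powersetCard hw.1 hx hy hyw, fun w' hw' => ?_⟩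
  have hs := swap_score (V := V) hx hyw
  have := hw.2 w' hw'
  omega

lemma no_winner_strict {C : Finset α} {V : Multiset (Finset α)} {k : ℕ} {w : Finset α} {x y : α}
    (hw : w ∈ avWinners C V k) (hx : x ∈ w) (hy : y ∈ C) (hyw : y ∉ w)
    (h : cnt (fun v => x ∈ v) V < cnt (fun v => y ∈ v) V) : False := by
  rw [avWinners, Finset.mem_filter] at hw
  have h2 := hw.2 _ (swap_mem_powersetCard hw.1 hx hy hyw)
  have hs := swap_score (V := V) hx hyw
  omega

lemma exists_sub_of_le_map {γ : Type u} {δ : Type v} (f : γ → δ) (s : Multiset γ) :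
    ∀ M : Multiset δ, M ≤ s.map f → ∃ s' ≤ s, s'.map f = M := by
  classical
  induction s using Multiset.induction_on with
  | empty =>
    intro M hM
    rw [Multiset.map_zero, Multiset.le_zero] at hM
    exact ⟨0, le_refl _, by simp [hM]⟩
  | cons a s ih =>
    intro M hM
    rw [Multiset.map_cons] at hM
    by_cases hfa : f a ∈ M
    · have h1 : M.erase (f a) ≤ s.map f := by
        have h2 := Multiset.erase_le_erase (f a) hM
        rwa [Multiset.erase_cons_head] at h2
      obtain ⟨s', hs', hmap⟩ := ih _ h1
      refine ⟨a ::ₘ s', Multiset.cons_le_cons _ hs', ?_⟩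
      rw [Multiset.map_cons, hmap, Multiset.cons_erase hfa]
    · have h1 : M ≤ s.map f := by
        rw [Multiset.le_iff_count] at hM ⊢
        intro x
        have h3 := hM x
        rw [Multiset.count_cons] at h3
        by_cases hx : x = f a
        · subst hx
          rw [Multiset.count_eq_zero_of_notMem hfa]
          omega
        · simpa [hx] using h3
      obtain ⟨s', hs', hmap⟩ := ih _ h1
      exact ⟨s', le_trans hs' (Multiset.le_cons_self _ _), hmap⟩

end AuxAV

namespace Stmt14

variable {β : Type u} [DecidableEq β]

/-- Candidate type: `c(r)` for a red vertex `r`, a fresh candidate of the set `X`,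
a fresh candidate of a set `C(b)`, or the distinguished candidate `p`. -/
abbrev Cand (β : Type u) := β ⊕ ℕ ⊕ (β × ℕ) ⊕ Unit

/-- The distinguished candidate `p`. -/
def pc : Cand β := Sum.inr (Sum.inr (Sum.inr ()))

/-- The neighbors of the red vertex `r`. -/
def nbrR (Ed : Finset (β × β)) (r : β) : Finset β := (Ed.filter fun e => e.1 = r).image Prod.snd

/-- The neighbors of the blue vertex `b`. -/
def nbrB (Ed : Finset (β × β)) (b : β) : Finset β := (Ed.filter fun e => e.2 = b).image Prod.fst

/-- The set `X` of `d + 1 − t` fresh candidates. -/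
def Xset (d t : ℕ) : Finset (Cand β) :=
  (Finset.range (d + 1 - t)).image fun j => (Sum.inr (Sum.inl j) : Cand β)

/-- The set `C(b)` of `d − deg_G(b)` fresh candidates created for the blue vertex `b`. -/
def CbSet (Ed : Finset (β × β)) (d : ℕ) (b : β) : Finset (Cand β) :=
  (Finset.range (d - (nbrB Ed b).card)).image
    fun i => (Sum.inr (Sum.inr (Sum.inl (b, i))) : Cand β)

/-- The whole candidate set. -/
def Ctot (Ed : Finset (β × β)) (R B : Finset β) (d t : ℕ) : Finset (Cand β) :=
  insert pc (R.image Sum.inl ∪ Xset d t ∪ B.biUnion (CbSet Ed d))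

/-- The vote `v(b) = {p} ∪ C(N_G(b)) ∪ C(b)` of a blue vertex `b`. -/
def vb (Ed : Finset (β × β)) (d : ℕ) (b : β) : Finset (Cand β) :=
  insert pc ((nbrB Ed b).image Sum.inl ∪ CbSet Ed d b)

/-- The votes: for each `i ≤ κ'`, `κ` copies of the block `X_i`, and for each blue
vertex `b ∈ B`, the vote `v(b)`. -/
def votes (Ed : Finset (β × β)) (B : Finset β) (d κ κ' : ℕ) (Xb : ℕ → Finset (Cand β)) :
    Multiset (Finset (Cand β)) :=
  (Finset.range (κ' + 1)).val.bind (fun i => Multiset.replicate κ (Xb i))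
    + B.val.map (vb Ed d)


lemma mem_nbrB {Ed : Finset (β × β)} {r b : β} : r ∈ nbrB Ed b ↔ (r, b) ∈ Ed := by
  simp only [nbrB, Finset.mem_image, Finset.mem_filter, Prod.exists]
  constructor
  · rintro ⟨a, c, ⟨h, rfl⟩, rfl⟩; exact h
  · intro h; exact ⟨r, b, ⟨h, rfl⟩, rfl⟩

lemma pc_mem_vb (Ed : Finset (β × β)) (d : ℕ) (b : β) : (pc : Cand β) ∈ vb Ed d b :=
  Finset.mem_insert_self _ _

lemma inl_mem_vb {Ed : Finset (β × β)} {d : ℕ} {r b : β} :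
    (Sum.inl r : Cand β) ∈ vb Ed d b ↔ (r, b) ∈ Ed := by
  simp [vb, pc, CbSet, mem_nbrB]

/-- correctness of the reduction from Red-Blue Dominating Set to
destructive control by deleting voters for every AV-uniform ABMV rule. -/
theorem dcdv_av_uniform
    (φ : Finset (Cand β) → Multiset (Finset (Cand β)) → ℕ → Finset (Finset (Cand β)))
    (huniform : ∀ (C : Finset (Cand β)) (V : Multiset (Finset (Cand β))) (k : ℕ),
      k ≤ C.card → (∀ v ∈ V, v ⊆ C) → (∃ s, ∀ v ∈ V, v.card = s) →
      φ C V k = avWinners C V k)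
    (R B : Finset β) (hRB : Disjoint R B) (Ed : Finset (β × β))
    (hEd : ∀ e ∈ Ed, e.1 ∈ R ∧ e.2 ∈ B)
    (hR : R.Nonempty)
    (hnoisoR : ∀ r ∈ R, (nbrR Ed r).Nonempty)
    (hnoisoB : ∀ b ∈ B, (nbrB Ed b).Nonempty)
    (d : ℕ) (hd : d = B.sup fun b => (nbrB Ed b).card)
    (d' : ℕ) (hd' : d' = R.sup fun r => (nbrR Ed r).card)
    (κ : ℕ) (hκ : 1 ≤ κ) (hRcard : R.card ≤ κ * (d + 1)) (hBcard : κ + d' ≤ B.card)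
    (κ' t : ℕ) (hκ't : R.card = κ' * (d + 1) + t) (ht : t ≤ d)
    (Xb : ℕ → Finset (Cand β))
    (hXbcard : ∀ i ∈ Finset.range (κ' + 1), (Xb i).card = d + 1)
    (hXbdisj : ∀ i ∈ Finset.range (κ' + 1), ∀ j ∈ Finset.range (κ' + 1), i ≠ j →
      Disjoint (Xb i) (Xb j))
    (hXbunion : (Finset.range (κ' + 1)).biUnion Xb = R.image Sum.inl ∪ Xset d t) :
    (∃ B' ⊆ B, B'.card = κ ∧ ∀ r ∈ R, ∃ b ∈ B', (r, b) ∈ Ed) ↔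
      (∃ V' ≤ votes Ed B d κ κ' Xb, Multiset.card V' ≤ B.card - κ ∧
        ∀ w ∈ φ (Ctot Ed R B d t) (votes Ed B d κ κ' Xb - V') R.card, pc ∉ w) := by
  classical
  obtain ⟨r0, hr0⟩ := hR
  set Ct := Ctot Ed R B d t with hCtdef
  set blocksM : Multiset (Finset (Cand β)) :=
    (Finset.range (κ' + 1)).val.bind (fun i => Multiset.replicate κ (Xb i)) with hblocksdef
  set blueM : Multiset (Finset (Cand β)) := B.val.map (vb Ed d) with hbluedef
  have hVt : votes Ed B d κ κ' Xb = blocksM + blueM := rfl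
  have hdeg : ∀ b ∈ B, (nbrB Ed b).card ≤ d :=
    fun b hb => hd ▸ Finset.le_sup (f := fun b => (nbrB Ed b).card) hb
  have hXbsub : ∀ i ∈ Finset.range (κ' + 1), Xb i ⊆ R.image Sum.inl ∪ Xset d t := fun i hi =>
    hXbunion ▸ Finset.subset_biUnion_of_mem Xb hi
  have hpcXb : ∀ i ∈ Finset.range (κ' + 1), (pc : Cand β) ∉ Xb i := by
    intro i hi hmem
    have := hXbsub i hi hmem
    simp [pc, Xset] at this
  have hmem_blocks : ∀ v ∈ blocksM, ∃ i ∈ Finset.range (κ' + 1), v = Xb i := by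
    intro v hv
    rw [hblocksdef, Multiset.mem_bind] at hv
    obtain ⟨i, hi, hvi⟩ := hv
    exact ⟨i, hi, Multiset.eq_of_mem_replicate hvi⟩
  have hpcCt : (pc : Cand β) ∈ Ct := Finset.mem_insert_self _ _
  have hinlCt : ∀ r ∈ R, (Sum.inl r : Cand β) ∈ Ct := fun r hr =>
    Finset.mem_insert_of_mem
      (Finset.mem_union_left _ (Finset.mem_union_left _ (Finset.mem_image_of_mem _ hr)))
  have hXbCt : ∀ i ∈ Finset.range (κ' + 1), Xb i ⊆ Ct := by
    intro i hi
    refine (hXbsub i hi).trans ?_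
    intro x hx
    exact Finset.mem_insert_of_mem (Finset.mem_union_left _ hx)
  have hvbCt : ∀ b ∈ B, vb Ed d b ⊆ Ct := by
    intro b hb x hx
    rw [vb, Finset.mem_insert] at hx
    rcases hx with rfl | hx
    · exact hpcCt
    rcases Finset.mem_union.1 hx with hx | hx
    · obtain ⟨r, hrn, rfl⟩ := Finset.mem_image.1 hx
      exact hinlCt r (hEd _ (mem_nbrB.1 hrn)).1
    · exact Finset.mem_insert_of_mem
        (Finset.mem_union_right _ (Finset.mem_biUnion.2 ⟨b, hb, hx⟩))
  have hvbcard : ∀ b ∈ B, (vb Ed d b).card = d + 1 := by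
    intro b hb
    rw [vb]
    have hpcnot : (pc : Cand β) ∉ (nbrB Ed b).image Sum.inl ∪ CbSet Ed d b := by
      simp [pc, CbSet]
    have hdisj : Disjoint ((nbrB Ed b).image Sum.inl) (CbSet Ed d b) := by
      rw [Finset.disjoint_left]
      rintro x hx1 hx2
      obtain ⟨r, _, rfl⟩ := Finset.mem_image.1 hx1
      simp [CbSet] at hx2
    rw [Finset.card_insert_of_notMem hpcnot, Finset.card_union_of_disjoint hdisj,
      Finset.card_image_of_injective _ Sum.inl_injective, CbSet,
      Finset.card_image_of_injective _ (fun i j hij => by simpa using hij),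
      Finset.card_range]
    have := hdeg b hb
    omega
  have hvotes_mem : ∀ v ∈ votes Ed B d κ κ' Xb, v ⊆ Ct ∧ v.card = d + 1 := by
    intro v hv
    rw [hVt, Multiset.mem_add] at hv
    rcases hv with hv | hv
    · obtain ⟨i, hi, rfl⟩ := hmem_blocks v hv
      exact ⟨hXbCt i hi, hXbcard i hi⟩
    · rw [hbluedef, Multiset.mem_map] at hv
      obtain ⟨b, hb, rfl⟩ := hv
      exact ⟨hvbCt b (Finset.mem_val.mp hb), hvbcard b (Finset.mem_val.mp hb)⟩
  have hkCt : R.card ≤ Ct.card := by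
    calc R.card = (R.image Sum.inl).card :=
          (Finset.card_image_of_injective _ Sum.inl_injective).symm
      _ ≤ Ct.card := Finset.card_le_card (fun x hx =>
          Finset.mem_insert_of_mem (Finset.mem_union_left _ (Finset.mem_union_left _ hx)))
  have hφeq : ∀ V' ≤ votes Ed B d κ κ' Xb,
      φ Ct (votes Ed B d κ κ' Xb - V') R.card
        = avWinners Ct (votes Ed B d κ κ' Xb - V') R.card := by
    intro V' _
    refine huniform _ _ _ hkCt ?_ ⟨d + 1, ?_⟩
    · intro v hv
      exact (hvotes_mem v (Multiset.mem_of_le tsub_le_self hv)).1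
    · intro v hv
      exact (hvotes_mem v (Multiset.mem_of_le tsub_le_self hv)).2
  have hblocks_count : ∀ x : Cand β,
      cnt (fun v => x ∈ v) blocksM
        = ((Finset.range (κ' + 1)).filter (fun i => x ∈ Xb i)).card * κ := by
    intro x
    rw [hblocksdef, cnt_bind]
    have h1 : ((Finset.range (κ' + 1)).val.map fun i =>
          cnt (fun v => x ∈ v) (Multiset.replicate κ (Xb i))).sum
        = ∑ i ∈ Finset.range (κ' + 1), if x ∈ Xb i then κ else 0 := by
      rw [Finset.sum]
      congr 1
      exact Multiset.map_congr rfl fun i _ => cnt_replicate _ _ _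
    rw [h1, ← Finset.sum_filter, Finset.sum_const, smul_eq_mul]
  have hblocks_le : ∀ x : Cand β, cnt (fun v => x ∈ v) blocksM ≤ κ := by
    intro x
    rw [hblocks_count]
    have hcard1 : ((Finset.range (κ' + 1)).filter (fun i => x ∈ Xb i)).card ≤ 1 := by
      rw [Finset.card_le_one]
      intro i hi j hj
      rw [Finset.mem_filter] at hi hj
      by_contra hij
      exact (Finset.disjoint_left.1 (hXbdisj i hi.1 j hj.1 hij) hi.2) hj.2
    calc ((Finset.range (κ' + 1)).filter (fun i => x ∈ Xb i)).card * κ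
        ≤ 1 * κ := Nat.mul_le_mul_right κ hcard1
      _ = κ := one_mul κ
  have hblocks_ge : ∀ r ∈ R, κ ≤ cnt (fun v => (Sum.inl r : Cand β) ∈ v) blocksM := by
    intro r hr
    have hx : (Sum.inl r : Cand β) ∈ (Finset.range (κ' + 1)).biUnion Xb := by
      rw [hXbunion]
      exact Finset.mem_union_left _ (Finset.mem_image_of_mem _ hr)
    obtain ⟨i, hi, hmem⟩ := Finset.mem_biUnion.1 hx
    rw [hblocks_count]
    have hpos : 1 ≤ ((Finset.range (κ' + 1)).filter
        (fun j => (Sum.inl r : Cand β) ∈ Xb j)).card :=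
      Finset.card_pos.2 ⟨i, Finset.mem_filter.2 ⟨hi, hmem⟩⟩
    calc κ = 1 * κ := (one_mul κ).symm
      _ ≤ _ := Nat.mul_le_mul_right κ hpos
  have hblocks_pc : cnt (fun v => (pc : Cand β) ∈ v) blocksM = 0 := by
    rw [cnt_eq_zero]
    intro v hv
    obtain ⟨i, hi, rfl⟩ := hmem_blocks v hv
    exact hpcXb i hi
  have happrA : ∀ x ∈ Ct, x ≠ pc → x ∉ R.image Sum.inl →
      cnt (fun v => x ∈ v) (votes Ed B d κ κ' Xb) ≤ κ := by
    intro x hx hxpc hximg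
    rw [hVt, cnt_add]
    rw [hCtdef, Ctot, Finset.mem_insert] at hx
    rcases hx with rfl | hx
    · exact absurd rfl hxpc
    rcases Finset.mem_union.1 hx with hx | hx
    · rcases Finset.mem_union.1 hx with hx | hx
      · exact absurd hx hximg
      · have hblue0 : cnt (fun v => x ∈ v) blueM = 0 := by
          rw [cnt_eq_zero]
          intro v hv
          rw [hbluedef, Multiset.mem_map] at hv
          obtain ⟨b, hb, rfl⟩ := hv
          obtain ⟨j, hj, rfl⟩ := Finset.mem_image.1 hx
          simp [vb, pc, CbSet]
        have := hblocks_le x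
        omega
    · obtain ⟨b0, hb0, hxb0⟩ := Finset.mem_biUnion.1 hx
      obtain ⟨j, hj, rfl⟩ := Finset.mem_image.1 hxb0
      have hblocks0 : cnt
          (fun v => (Sum.inr (Sum.inr (Sum.inl (b0, j))) : Cand β) ∈ v) blocksM = 0 := by
        rw [cnt_eq_zero]
        intro v hv
        obtain ⟨i, hi, rfl⟩ := hmem_blocks v hv
        intro hmem
        have := hXbsub i hi hmem
        simp [Xset] at this
      have hblue1 : cnt
          (fun v => (Sum.inr (Sum.inr (Sum.inl (b0, j))) : Cand β) ∈ v) blueM ≤ 1 := by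
        rw [hbluedef, cnt_map_val]
        refine le_trans (Finset.card_le_card (fun b hb => ?_)) (Finset.card_singleton b0).le
        rw [Finset.mem_filter] at hb
        have h2 := hb.2
        rw [Finset.mem_singleton]
        simp only [vb, pc, CbSet, Finset.mem_insert, Finset.mem_union,
          Finset.mem_image, Finset.mem_range] at h2
        rcases h2 with h2 | h2 | h2
        · exact absurd h2 (by simp)
        · obtain ⟨r, _, hr2⟩ := h2
          exact absurd hr2 (by simp)
        · obtain ⟨i, _, hi2⟩ := h2
          simp only [Sum.inr.injEq, Sum.inl.injEq, Prod.mk.injEq] at hi2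
          exact hi2.1
      omega
  constructor
  · rintro ⟨B', hB'B, hB'card, hdom⟩
    have hsub : (B \ B').val.map (vb Ed d) ≤ votes Ed B d κ κ' Xb := by
      rw [hVt]
      calc (B \ B').val.map (vb Ed d) ≤ blueM := by
            rw [hbluedef]
            exact Multiset.map_le_map (Finset.val_le_iff.2 (Finset.sdiff_subset))
        _ ≤ blocksM + blueM := le_add_self
    refine ⟨(B \ B').val.map (vb Ed d), hsub, ?_, ?_⟩
    · rw [Multiset.card_map]
      have : (B \ B').card = B.card - κ := by rw [Finset.card_sdiff_of_subset hB'B, hB'card]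
      exact le_of_eq this
    · have hBval : B.val = (B \ B').val + B'.val := by
        rw [Finset.sdiff_val, tsub_add_cancel_of_le (Finset.val_le_iff.2 hB'B)]
      have hrest : votes Ed B d κ κ' Xb - (B \ B').val.map (vb Ed d)
          = blocksM + B'.val.map (vb Ed d) := by
        rw [hVt, hbluedef, hBval, Multiset.map_add]
        rw [add_comm ((B \ B').val.map (vb Ed d)) (B'.val.map (vb Ed d)), ← add_assoc]
        exact add_tsub_cancel_right _ _
      intro w hw
      rw [hφeq _ hsub, hrest] at hw
      intro hpw
      have hwP := (Finset.mem_filter.1 hw).1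
      rw [Finset.mem_powersetCard] at hwP
      have hex : ∃ r ∈ R, (Sum.inl r : Cand β) ∉ w := by
        by_contra hall
        push_neg at hall
        have hsubw : insert (pc : Cand β) (R.image (Sum.inl : β → Cand β)) ⊆ w := by
          refine Finset.insert_subset hpw ?_
          intro x hx
          obtain ⟨r, hrR, rfl⟩ := Finset.mem_image.1 hx
          exact hall r hrR
        have h1 : (insert (pc : Cand β) (R.image (Sum.inl : β → Cand β))).card
            = R.card + 1 := by
          rw [Finset.card_insert_of_notMem (by simp [pc]),
            Finset.card_image_of_injective _ Sum.inl_injective]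
        have h2 := Finset.card_le_card hsubw
        rw [h1, hwP.2] at h2
        omega
      obtain ⟨r, hrR, hrw⟩ := hex
      have hcpc : cnt (fun v => (pc : Cand β) ∈ v)
          (blocksM + B'.val.map (vb Ed d)) = κ := by
        rw [cnt_add, hblocks_pc, cnt_map_val, zero_add,
          Finset.filter_true_of_mem (fun b _ => pc_mem_vb Ed d b), hB'card]
      have hcr : κ + 1 ≤ cnt (fun v => (Sum.inl r : Cand β) ∈ v)
          (blocksM + B'.val.map (vb Ed d)) := by
        rw [cnt_add]
        have h1 := hblocks_ge r hrR
        have h2 : 1 ≤ cnt (fun v => (Sum.inl r : Cand β) ∈ v)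
            (B'.val.map (vb Ed d)) := by
          obtain ⟨b, hb, hrb⟩ := hdom r hrR
          exact cnt_pos.2 ⟨vb Ed d b,
            Multiset.mem_map_of_mem _ (Finset.mem_val.mpr hb), inl_mem_vb.2 hrb⟩
        omega
      exact no_winner_strict hw hpw (hinlCt r hrR) hrw (by omega)
  · rintro ⟨V', hV'le, hV'card, hploses⟩
    rw [hφeq _ hV'le] at hploses
    set V2 := votes Ed B d κ κ' Xb - V' with hV2def
    have hV2le : V2 ≤ votes Ed B d κ κ' Xb := tsub_le_self
    set m := cnt (fun v => (pc : Cand β) ∈ v) V2 with hm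
    have hκB : κ ≤ B.card := le_trans (Nat.le_add_right κ d') hBcard
    have hmge : κ ≤ m := by
      have h1 : cnt (fun v => (pc : Cand β) ∈ v) (votes Ed B d κ κ' Xb)
          = B.card := by
        rw [hVt, cnt_add, hblocks_pc, zero_add, hbluedef, cnt_map_val,
          Finset.filter_true_of_mem (fun b _ => pc_mem_vb Ed d b)]
      have h2 : m = cnt (fun v => (pc : Cand β) ∈ v) (votes Ed B d κ κ' Xb)
          - cnt (fun v => (pc : Cand β) ∈ v) V' := by
        rw [hm, hV2def, cnt_sub _ hV'le]
      have h3 : cnt (fun v => (pc : Cand β) ∈ v) V' ≤ Multiset.card V' :=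
        cnt_le_card _ _
      omega
    have hkey : ∀ r ∈ R,
        cnt (fun v => (pc : Cand β) ∈ v ∧ (Sum.inl r : Cand β) ∉ v) V2 + 1 ≤ κ := by
      intro r hr
      have happr : m + 1 ≤ cnt (fun v => (Sum.inl r : Cand β) ∈ v) V2 := by
        by_contra hcon
        push_neg at hcon
        obtain ⟨w, hw⟩ := avWinners_nonempty (C := Ct) (V := V2) (k := R.card) hkCt
        have hpw : (pc : Cand β) ∉ w := hploses w hw
        have hwP := (Finset.mem_filter.1 hw).1
        rw [Finset.mem_powersetCard] at hwP
        by_cases hrw : (Sum.inl r : Cand β) ∈ w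
        · have hle2 : cnt (fun v => (Sum.inl r : Cand β) ∈ v) V2
              ≤ cnt (fun v => (pc : Cand β) ∈ v) V2 := by omega
          have hw2 := swap_mem_winners hw hrw hpcCt hpw hle2
          exact hploses _ hw2 (Finset.mem_insert_self _ _)
        · have hex : ∃ x ∈ w, x ∉ R.image Sum.inl := by
            by_contra hall
            push_neg at hall
            have hsubw : w ⊆ (R.image Sum.inl).erase (Sum.inl r) := by
              intro x hx
              exact Finset.mem_erase.2 ⟨fun he => hrw (he ▸ hx), hall x hx⟩
            have h2 := Finset.card_le_card hsubw
            rw [Finset.card_erase_of_mem (Finset.mem_image_of_mem _ hr),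
              Finset.card_image_of_injective _ Sum.inl_injective, hwP.2] at h2
            have hRpos : 0 < R.card := Finset.card_pos.2 ⟨r, hr⟩
            omega
          obtain ⟨x, hxw, hximg⟩ := hex
          have hxpc : x ≠ pc := fun he => hpw (he ▸ hxw)
          have hxle : cnt (fun v => x ∈ v) V2 ≤ κ :=
            le_trans (cnt_le_of_le _ hV2le) (happrA x (hwP.1 hxw) hxpc hximg)
          have hw2 := swap_mem_winners hw hxw hpcCt hpw (by omega)
          exact hploses _ hw2 (Finset.mem_insert_self _ _)
      have hblk : cnt
          (fun v => (Sum.inl r : Cand β) ∈ v ∧ (pc : Cand β) ∉ v) V2 ≤ κ := by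
        refine le_trans (cnt_le_of_le _ hV2le) ?_
        rw [hVt, cnt_add]
        have h1 : cnt
            (fun v => (Sum.inl r : Cand β) ∈ v ∧ (pc : Cand β) ∉ v) blueM = 0 := by
          rw [cnt_eq_zero]
          intro v hv
          rw [hbluedef, Multiset.mem_map] at hv
          obtain ⟨b, hb, rfl⟩ := hv
          exact fun hcon2 => hcon2.2 (pc_mem_vb Ed d b)
        have h2 : cnt
            (fun v => (Sum.inl r : Cand β) ∈ v ∧ (pc : Cand β) ∉ v) blocksM
            ≤ cnt (fun v => (Sum.inl r : Cand β) ∈ v) blocksM :=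
          cnt_mono_pred _ (fun v _ hv => hv.1)
        have h3 := hblocks_le (Sum.inl r : Cand β)
        omega
      have hsplit1 : m = cnt
            (fun v => (pc : Cand β) ∈ v ∧ (Sum.inl r : Cand β) ∈ v) V2
          + cnt (fun v => (pc : Cand β) ∈ v ∧ ¬(Sum.inl r : Cand β) ∈ v) V2 :=
        cnt_split _ (fun v => (Sum.inl r : Cand β) ∈ v) V2
      have hsplit2 : cnt (fun v => (Sum.inl r : Cand β) ∈ v) V2
          = cnt (fun v => (Sum.inl r : Cand β) ∈ v ∧ (pc : Cand β) ∈ v) V2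
          + cnt (fun v => (Sum.inl r : Cand β) ∈ v ∧ ¬(pc : Cand β) ∈ v) V2 :=
        cnt_split _ (fun v => (pc : Cand β) ∈ v) V2
      have hcomm : cnt
            (fun v => (Sum.inl r : Cand β) ∈ v ∧ (pc : Cand β) ∈ v) V2
          = cnt (fun v => (pc : Cand β) ∈ v ∧ (Sum.inl r : Cand β) ∈ v) V2 :=
        cnt_congr fun v _ => and_comm
      have hbmk : cnt (fun v => (Sum.inl r : Cand β) ∈ v ∧ ¬(pc : Cand β) ∈ v) V2
          = cnt (fun v => (Sum.inl r : Cand β) ∈ v ∧ (pc : Cand β) ∉ v) V2 :=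
        cnt_congr fun v _ => Iff.rfl
      have hnot : cnt (fun v => (pc : Cand β) ∈ v ∧ ¬(Sum.inl r : Cand β) ∈ v) V2
          = cnt (fun v => (pc : Cand β) ∈ v ∧ (Sum.inl r : Cand β) ∉ v) V2 :=
        cnt_congr fun v _ => Iff.rfl
      omega
    have hMle : Multiset.filter (fun v => (pc : Cand β) ∈ v) V2 ≤ B.val.map (vb Ed d) := by
      refine le_trans (Multiset.filter_le_filter _ hV2le) ?_
      rw [hVt, Multiset.filter_add]
      have h1 : Multiset.filter (fun v => (pc : Cand β) ∈ v) blocksM = 0 :=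
        Multiset.filter_eq_nil.2 (fun v hv => by
          obtain ⟨i, hi, rfl⟩ := hmem_blocks v hv
          exact hpcXb i hi)
      have h2 : Multiset.filter (fun v => (pc : Cand β) ∈ v) blueM = blueM :=
        Multiset.filter_eq_self.2 (fun v hv => by
          rw [hbluedef, Multiset.mem_map] at hv
          obtain ⟨b, hb, rfl⟩ := hv
          exact pc_mem_vb Ed d b)
      rw [h1, h2, zero_add, hbluedef]
    obtain ⟨s', hs'le, hs'map⟩ := exists_sub_of_le_map (vb Ed d) B.val _ hMle
    have hs'nodup : s'.Nodup := Multiset.nodup_of_le hs'le B.nodup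
    set S : Finset β := ⟨s', hs'nodup⟩ with hSdef
    have hSB : S ⊆ B := Finset.val_le_iff.1 hs'le
    have hScard : S.card = m := by
      have h1 := congrArg Multiset.card hs'map
      rw [Multiset.card_map] at h1
      rw [hm, cnt_eq_card_filter]
      exact h1
    obtain ⟨B', hB'S, hB'card⟩ := Finset.exists_subset_card_eq (s := S) (n := κ) (by omega)
    refine ⟨B', hB'S.trans hSB, hB'card, ?_⟩
    intro r hr
    by_contra hno
    push_neg at hno
    have hfb : B' ⊆ S.filter (fun b => (r, b) ∉ Ed) := fun b hb =>
      Finset.mem_filter.2 ⟨hB'S hb, hno b hb⟩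
    have hcf : (S.filter (fun b => (r, b) ∉ Ed)).card + 1 ≤ κ := by
      have h1 := hkey r hr
      have h3 : (S.filter (fun b => (r, b) ∉ Ed)).card
          = cnt (fun b => (r, b) ∉ Ed) s' := by
        rw [cnt_eq_card_filter]
        rfl
      have h4 : cnt (fun b => (r, b) ∉ Ed) s'
          = cnt (fun b => (Sum.inl r : Cand β) ∉ vb Ed d b) s' :=
        cnt_congr fun b _ => not_congr inl_mem_vb.symm
      have h5 : cnt (fun v => (Sum.inl r : Cand β) ∉ v) (s'.map (vb Ed d))
          = cnt (fun b => (Sum.inl r : Cand β) ∉ vb Ed d b) s' :=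
        cnt_map _ _ _
      have h6 : cnt (fun v => (Sum.inl r : Cand β) ∉ v) (s'.map (vb Ed d))
          = cnt (fun v => (pc : Cand β) ∈ v ∧ (Sum.inl r : Cand β) ∉ v) V2 := by
        rw [hs'map, cnt_filter]
        exact cnt_congr fun v _ => and_comm
      omega
    have h4 := Finset.card_le_card hfb
    rw [hB'card] at h4
    omega


end Stmt14
end

section
/- Let ω be a Thiele function with ω(1) > 0. Let G = (R ∪ B, E) be a bipartite graph with no isolated vertices in which every r ∈ R has degree exactly d ≥ 1, and let κ ≥ 0 be an integer. Construct the election with candidates C = R ∪ X, where each r ∈ R is a candidate and X is a set of |R| fresh candidates; committee size k = |R|; and a tie-breaking linear order ⊳ placing all of R first and then all of X. Votes V: for each b ∈ B, one vote v(b) = N_G(b); and for each x ∈ X, d copies of the vote {x}. Then there exists B' ⊆ B with |B'| ≤ κ dominating R if and only if there exists a submultiset V' ⊆ V with |V'| ≤ κ such that no candidate of R is contained in the seqω winning k-committee of (C, V ∖ V') with respect to ⊳. -/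
open Finset

attribute [local instance] Classical.propDecidable

universe u

variable {α : Type u}

namespace Stmt15

variable {β : Type u} [DecidableEq β]

/-- Candidate type: a red vertex `r ∈ R`, or a fresh candidate of the set `X`. -/
abbrev Cand (β : Type u) := β ⊕ ℕ

/-- The neighbors of the red vertex `r`. -/
def nbrR (Ed : Finset (β × β)) (r : β) : Finset β := (Ed.filter fun e => e.1 = r).image Prod.snd

/-- The neighbors of the blue vertex `b`. -/
def nbrB (Ed : Finset (β × β)) (b : β) : Finset β := (Ed.filter fun e => e.2 = b).image Prod.fst

/-- The set `X` of `|R|` fresh candidates. -/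
def Xset (R : Finset β) : Finset (Cand β) :=
  (Finset.range R.card).image fun j => (Sum.inr j : Cand β)

/-- The candidate set `C = R ∪ X`. -/
def Ctot (R : Finset β) : Finset (Cand β) := R.image Sum.inl ∪ Xset R

/-- The votes: for each blue vertex `b ∈ B`, the vote `v(b) = N_G(b)`, and for each
`x ∈ X`, `d` copies of the vote `{x}`. -/
def votes (Ed : Finset (β × β)) (R B : Finset β) (d : ℕ) : Multiset (Finset (Cand β)) :=
  B.val.map (fun b => (nbrB Ed b).image Sum.inl)
    + (Finset.range R.card).val.bind
        (fun j => Multiset.replicate d ({Sum.inr j} : Finset (Cand β)))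


section Aux
variable {γ : Type u} [DecidableEq γ]

lemma marginContrib_eq (ω : ℕ → ℝ) (hω0 : ω 0 = 0) (V : Multiset (Finset γ)) (w : Finset γ)
    (c : γ) (hdisj : ∀ v ∈ V, c ∈ v → v ∩ w = ∅) :
    marginContrib ω V w c = (Multiset.card (V.filter fun v => c ∈ v) : ℝ) * ω 1 := by
  induction V using Multiset.induction_on with
  | empty => simp [marginContrib, thieleScore]
  | cons v V ih =>
    have h1 : marginContrib ω (v ::ₘ V) w c
        = (ω ((v ∩ insert c w).card) - ω ((v ∩ w).card)) + marginContrib ω V w c := by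
      simp only [marginContrib, thieleScore, Multiset.map_cons, Multiset.sum_cons]
      ring
    rw [h1, ih (fun v hv => hdisj v (Multiset.mem_cons_of_mem hv))]
    by_cases hc : c ∈ v
    · have hvw : v ∩ w = ∅ := hdisj v (Multiset.mem_cons_self v V) hc
      have h2 : v ∩ insert c w = {c} := by
        ext y
        simp only [Finset.mem_inter, Finset.mem_insert, Finset.mem_singleton]
        constructor
        · rintro ⟨hy, rfl | hy2⟩
          · rfl
          · exact absurd (Finset.mem_inter.mpr ⟨hy, hy2⟩) (by simp [hvw])
        · rintro rfl; exact ⟨hc, Or.inl rfl⟩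
      rw [h2, hvw, Multiset.filter_cons]
      simp only [hc, if_pos, Multiset.card_add, Multiset.card_singleton]
      push_cast
      simp [hω0]
      ring
    · have h2 : v ∩ insert c w = v ∩ w := by
        ext y
        simp only [Finset.mem_inter, Finset.mem_insert]
        constructor
        · rintro ⟨hy, rfl | hy2⟩
          · exact absurd hy hc
          · exact ⟨hy, hy2⟩
        · rintro ⟨hy, hy2⟩; exact ⟨hy, Or.inr hy2⟩
      rw [h2, Multiset.filter_cons]
      simp [hc]

lemma seqNext_nonempty (ω : ℕ → ℝ) (pri : γ → ℕ) (V : Multiset (Finset γ)) {C w : Finset γ}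
    (h : (C \ w).Nonempty) : (seqNext ω pri V C w).Nonempty := by
  obtain ⟨c, hc, hmax⟩ := Finset.exists_max_image (C \ w) (marginContrib ω V w) h
  have hcM : c ∈ maxMarginSet ω V C w := Finset.mem_filter.mpr ⟨hc, hmax⟩
  obtain ⟨c', hc', hmin⟩ := Finset.exists_min_image (maxMarginSet ω V C w) pri ⟨c, hcM⟩
  exact ⟨c', Finset.mem_filter.mpr ⟨hc', hmin⟩⟩

lemma seqCommittee_mono (ω : ℕ → ℝ) (pri : γ → ℕ) (V : Multiset (Finset γ)) (C : Finset γ)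
    {m n : ℕ} (h : m ≤ n) : seqCommittee ω pri V C m ⊆ seqCommittee ω pri V C n := by
  induction n with
  | zero => simp [Nat.le_zero.mp h]
  | succ n ih =>
    rcases Nat.lt_or_ge m (n+1) with h' | h'
    · exact (ih (Nat.lt_succ_iff.mp h')).trans Finset.subset_union_left
    · have hmn : m = n + 1 := le_antisymm h h'
      subst hmn; exact Finset.Subset.refl _

lemma exists_preimage_of_le_map {δ : Type u} [DecidableEq δ] (f : γ → δ)
    {M : Multiset δ} : ∀ {s : Multiset γ}, M ≤ s.map f → ∃ u ≤ s, u.map f = M := by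
  induction M using Multiset.induction_on with
  | empty => intro s _; exact ⟨0, Multiset.zero_le s, rfl⟩
  | cons v M ih =>
    intro s h
    have hv : v ∈ s.map f := Multiset.mem_of_le h (Multiset.mem_cons_self v M)
    obtain ⟨b, hb, rfl⟩ := Multiset.mem_map.mp hv
    have hM : M ≤ (s.erase b).map f := by
      rw [Multiset.map_erase_of_mem f s hb]
      have h2 := Multiset.erase_le_erase (f b) h
      rwa [Multiset.erase_cons_head] at h2
    obtain ⟨u, hu, hmap⟩ := ih hM
    exact ⟨b ::ₘ u, le_of_le_of_eq (Multiset.cons_le_cons b hu) (Multiset.cons_erase hb),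
      by simp [hmap]⟩

end Aux

/-- correctness of the reduction from Red-Blue Dominating Set to
destructive control by deleting voters for sequential ω-Thiele rules with `ω(1) > 0`. -/
theorem dcdv_seq_thiele (ω : ℕ → ℝ) (hω0 : ω 0 = 0) (hmono : ∀ i, ω i ≤ ω (i + 1))
    (hω1 : 0 < ω 1)
    (R B : Finset β) (hRB : Disjoint R B) (Ed : Finset (β × β))
    (hEd : ∀ e ∈ Ed, e.1 ∈ R ∧ e.2 ∈ B)
    (hnoisoB : ∀ b ∈ B, (nbrB Ed b).Nonempty)
    (d : ℕ) (hd : 1 ≤ d) (hdegR : ∀ r ∈ R, (nbrR Ed r).card = d)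
    (κ : ℕ)
    (pri : Cand β → ℕ) (hinj : Set.InjOn pri (Ctot R : Set (Cand β)))
    (hpri : ∀ r ∈ R, ∀ j ∈ Finset.range R.card,
      pri (Sum.inl r : Cand β) < pri (Sum.inr j : Cand β)) :
    (∃ B' ⊆ B, B'.card ≤ κ ∧ ∀ r ∈ R, ∃ b ∈ B', (r, b) ∈ Ed) ↔
      (∃ V' ≤ votes Ed R B d, Multiset.card V' ≤ κ ∧
        ∀ r ∈ R, (Sum.inl r : Cand β) ∉
          seqCommittee ω pri (votes Ed R B d - V') (Ctot R) R.card) := by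
  classical
  set f : β → Finset (Cand β) := fun b => (nbrB Ed b).image Sum.inl with hf
  set A : Multiset (Finset (Cand β)) := B.val.map f with hA
  set Cx : Multiset (Finset (Cand β)) :=
    (Finset.range R.card).val.bind
      (fun j => Multiset.replicate d ({Sum.inr j} : Finset (Cand β))) with hCx
  have hvotes : votes Ed R B d = A + Cx := rfl
  have hnbrB_iff : ∀ a b : β, a ∈ nbrB Ed b ↔ (a, b) ∈ Ed := by
    intro a b
    simp only [nbrB, Finset.mem_image, Finset.mem_filter]
    constructor
    · rintro ⟨⟨x, y⟩, ⟨h1, rfl⟩, rfl⟩; exact h1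
    · intro h; exact ⟨(a, b), ⟨h, rfl⟩, rfl⟩
  have hAshape : ∀ v ∈ A, ∃ b ∈ B, v = f b := by
    intro v hv
    obtain ⟨b, hb, rfl⟩ := Multiset.mem_map.mp hv
    exact ⟨b, hb, rfl⟩
  have hCxshape : ∀ v ∈ Cx, ∃ j, j < R.card ∧ v = ({Sum.inr j} : Finset (Cand β)) := by
    intro v hv
    obtain ⟨j, hj, hv'⟩ := Multiset.mem_bind.mp hv
    exact ⟨j, by simpa using hj, Multiset.eq_of_mem_replicate hv'⟩
  have hAinr : ∀ v ∈ A, ∀ j : ℕ, (Sum.inr j : Cand β) ∉ v := by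
    intro v hv j hj
    obtain ⟨b, _, rfl⟩ := hAshape v hv
    obtain ⟨a, _, h⟩ := Finset.mem_image.mp hj
    exact Sum.inl_ne_inr h
  have hAinl : ∀ v ∈ A, ∀ y ∈ v, ∃ a, y = Sum.inl a := by
    intro v hv y hy
    obtain ⟨b, _, rfl⟩ := hAshape v hv
    obtain ⟨a, _, rfl⟩ := Finset.mem_image.mp hy
    exact ⟨a, rfl⟩
  have hXmem : ∀ c : Cand β, c ∈ Xset R ↔ ∃ j, j < R.card ∧ c = Sum.inr j := by
    intro c
    simp only [Xset, Finset.mem_image, Finset.mem_range]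
    constructor
    · rintro ⟨j, hj, rfl⟩; exact ⟨j, hj, rfl⟩
    · rintro ⟨j, hj, rfl⟩; exact ⟨j, hj, rfl⟩
  have hmemC : ∀ c ∈ Ctot R, (∃ r ∈ R, c = Sum.inl r) ∨ (∃ j, j < R.card ∧ c = Sum.inr j) := by
    intro c hc
    rcases Finset.mem_union.mp hc with h | h
    · obtain ⟨r, hr, rfl⟩ := Finset.mem_image.mp h
      exact Or.inl ⟨r, hr, rfl⟩
    · exact Or.inr ((hXmem c).mp h)
  have hRC : ∀ r ∈ R, (Sum.inl r : Cand β) ∈ Ctot R := fun r hr =>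
    Finset.mem_union_left _ (Finset.mem_image_of_mem _ hr)
  have hXC : Xset R ⊆ Ctot R := Finset.subset_union_right
  have hXcard : (Xset R).card = R.card := by
    rw [Xset, Finset.card_image_of_injective _ Sum.inr_injective, Finset.card_range]
  have hinlX : ∀ r : β, (Sum.inl r : Cand β) ∉ Xset R := by
    intro r h
    obtain ⟨j, _, h2⟩ := (hXmem _).mp h
    exact Sum.inl_ne_inr h2
  have hApprA_r : ∀ r ∈ R, Multiset.card (A.filter fun v => (Sum.inl r : Cand β) ∈ v) = d := by
    intro r hr
    rw [hA, Multiset.filter_map, Multiset.card_map]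
    have hcongr : Multiset.filter ((fun v => (Sum.inl r : Cand β) ∈ v) ∘ f) B.val
        = Multiset.filter (fun b => r ∈ nbrB Ed b) B.val := by
      apply Multiset.filter_congr
      intro b _
      simp only [Function.comp, hf]
      constructor
      · intro h
        obtain ⟨a, ha, h2⟩ := Finset.mem_image.mp h
        obtain rfl : a = r := Sum.inl.inj h2
        exact ha
      · intro h
        exact Finset.mem_image_of_mem _ h
    rw [hcongr]
    have h2 : (B.filter fun b => r ∈ nbrB Ed b) = nbrR Ed r := by
      ext b
      simp only [Finset.mem_filter, hnbrB_iff, nbrR, Finset.mem_image, Finset.mem_filter]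
      constructor
      · rintro ⟨hbB, hrb⟩; exact ⟨(r, b), ⟨hrb, rfl⟩, rfl⟩
      · rintro ⟨⟨x, y⟩, ⟨h1, rfl⟩, rfl⟩; exact ⟨(hEd _ h1).2, h1⟩
    calc Multiset.card (Multiset.filter (fun b => r ∈ nbrB Ed b) B.val)
        = (B.filter fun b => r ∈ nbrB Ed b).card := by rw [Finset.card, Finset.filter_val]
      _ = (nbrR Ed r).card := by rw [h2]
      _ = d := hdegR r hr
  have hApprCx_x : ∀ j, j < R.card →
      Multiset.card (Cx.filter fun v => (Sum.inr j : Cand β) ∈ v) = d := by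
    intro j hj
    have hjm : j ∈ (Finset.range R.card).val := by
      simpa using Finset.mem_range.mpr hj
    rw [hCx, ← Multiset.cons_erase hjm, Multiset.cons_bind, Multiset.filter_add]
    rw [Multiset.filter_eq_self.mpr, Multiset.filter_eq_nil.mpr]
    · simp
    · intro v hv
      obtain ⟨j', hj', hv'⟩ := Multiset.mem_bind.mp hv
      have hne : j' ≠ j := by
        intro h
        subst h
        have hnd : ((Finset.range R.card).val).Nodup := (Finset.range R.card).nodup
        exact ((hnd.mem_erase_iff).mp hj').1 rfl
      have hvv : v = ({Sum.inr j'} : Finset (Cand β)) := Multiset.eq_of_mem_replicate hv'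
      subst hvv
      simp only [Finset.mem_singleton]
      intro h
      exact hne (Sum.inr.inj h).symm
    · intro v hv
      have hvv := Multiset.eq_of_mem_replicate hv
      subst hvv
      simp
  have happr_votes : ∀ c ∈ Ctot R,
      Multiset.card ((votes Ed R B d).filter fun v => c ∈ v) = d := by
    intro c hc
    rw [hvotes, Multiset.filter_add, Multiset.card_add]
    rcases hmemC c hc with ⟨r, hr, rfl⟩ | ⟨j, hj, rfl⟩
    · rw [hApprA_r r hr, Multiset.filter_eq_nil.mpr, Multiset.card_zero, add_zero]
      intro v hv
      obtain ⟨j', _, rfl⟩ := hCxshape v hv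
      simp
    · rw [hApprCx_x j hj, Multiset.filter_eq_nil.mpr, Multiset.card_zero, zero_add]
      intro v hv
      exact hAinr v hv j
  constructor
  · rintro ⟨B', hB'B, hB'card, hdom⟩
    have hV'A : B'.val.map f ≤ A := by
      rw [hA]
      exact Multiset.map_le_map (Finset.val_le_iff.mpr hB'B)
    refine ⟨B'.val.map f, le_trans hV'A (by rw [hvotes]; exact Multiset.le_add_right _ _),
      by simpa using hB'card, ?_⟩
    set V' := B'.val.map f with hV'
    set W := votes Ed R B d - V' with hWdef
    have hWle : W ≤ votes Ed R B d := tsub_le_self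
    have hWeq : W = (A - V') + Cx := by
      rw [hWdef, hvotes, add_comm A Cx, add_tsub_assoc_of_le hV'A, add_comm]
    have happrx : ∀ j, j < R.card →
        Multiset.card (W.filter fun v => (Sum.inr j : Cand β) ∈ v) = d := by
      intro j hj
      rw [hWeq, Multiset.filter_add, Multiset.card_add, hApprCx_x j hj,
        Multiset.filter_eq_nil.mpr, Multiset.card_zero, zero_add]
      intro v hv
      exact hAinr v (Multiset.mem_of_le tsub_le_self hv) j
    have happr_r : ∀ r ∈ R,
        Multiset.card (W.filter fun v => (Sum.inl r : Cand β) ∈ v) < d := by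
      intro r hr
      have hfle : Multiset.filter (fun v => (Sum.inl r : Cand β) ∈ v) V'
          ≤ Multiset.filter (fun v => (Sum.inl r : Cand β) ∈ v) (votes Ed R B d) :=
        Multiset.filter_le_filter _ (le_trans hV'A (by rw [hvotes]; exact Multiset.le_add_right _ _))
      rw [hWdef, Multiset.filter_sub, Multiset.card_sub hfle, happr_votes _ (hRC r hr)]
      obtain ⟨b, hbB', hrb⟩ := hdom r hr
      have hmem : f b ∈ Multiset.filter (fun v => (Sum.inl r : Cand β) ∈ v) V' := by
        rw [Multiset.mem_filter]
        constructor
        · exact Multiset.mem_map_of_mem f hbB'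
        · rw [hf]
          exact Finset.mem_image_of_mem _ ((hnbrB_iff r b).mpr hrb)
      have h1 : 1 ≤ Multiset.card (Multiset.filter (fun v => (Sum.inl r : Cand β) ∈ v) V') :=
        Multiset.card_pos_iff_exists_mem.mpr ⟨_, hmem⟩
      have h2 : Multiset.card (Multiset.filter (fun v => (Sum.inl r : Cand β) ∈ v) V') ≤ d := by
        have h3 := Multiset.card_le_card hfle
        rwa [happr_votes _ (hRC r hr)] at h3
      omega
    have hWvotes_mem : ∀ v ∈ W,
        v ∈ A ∨ ∃ j, j < R.card ∧ v = ({Sum.inr j} : Finset (Cand β)) := by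
      intro v hv
      have hvv := Multiset.mem_of_le hWle hv
      rw [hvotes] at hvv
      rcases Multiset.mem_add.mp hvv with h | h
      · exact Or.inl h
      · exact Or.inr (hCxshape v h)
    have hmarg_x : ∀ w : Finset (Cand β), w ⊆ Xset R → ∀ j, j < R.card →
        (Sum.inr j : Cand β) ∉ w →
        marginContrib ω W w (Sum.inr j) = (d : ℝ) * ω 1 := by
      intro w hw j hj hjw
      rw [marginContrib_eq ω hω0 W w _ ?_, happrx j hj]
      intro v hv hjv
      rcases hWvotes_mem v hv with h | ⟨j', _, rfl⟩
      · exact absurd hjv (hAinr v h j)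
      · have hjj : j' = j := (Sum.inr.inj (Finset.mem_singleton.mp hjv)).symm
        subst hjj
        exact Finset.singleton_inter_of_notMem hjw
    have hmarg_r : ∀ w : Finset (Cand β), w ⊆ Xset R → ∀ r ∈ R,
        marginContrib ω W w (Sum.inl r) < (d : ℝ) * ω 1 := by
      intro w hw r hr
      rw [marginContrib_eq ω hω0 W w _ ?_]
      · have hlt := happr_r r hr
        exact mul_lt_mul_of_pos_right (Nat.cast_lt.mpr hlt) hω1
      · intro v hv hrv
        rcases hWvotes_mem v hv with h | ⟨j', _, rfl⟩
        · rw [Finset.eq_empty_iff_forall_notMem]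
          intro y hy
          obtain ⟨hyv, hyw⟩ := Finset.mem_inter.mp hy
          obtain ⟨a, rfl⟩ := hAinl v h y hyv
          obtain ⟨j2, _, h3⟩ := (hXmem _).mp (hw hyw)
          exact Sum.inl_ne_inr h3
        · exact absurd (Finset.mem_singleton.mp hrv) (by simp)
    have hinv : ∀ n, n ≤ R.card →
        seqCommittee ω pri W (Ctot R) n ⊆ Xset R ∧
          (seqCommittee ω pri W (Ctot R) n).card = n := by
      intro n
      induction n with
      | zero => intro _; exact ⟨Finset.empty_subset _, rfl⟩
      | succ n ih =>
        intro hn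
        obtain ⟨hsub, hcard⟩ := ih (Nat.le_of_succ_le hn)
        set w := seqCommittee ω pri W (Ctot R) n with hw
        have hlt : w.card < (Xset R).card := by
          rw [hXcard, hcard]; omega
        obtain ⟨x0, hx0X, hx0w⟩ : ∃ x ∈ Xset R, x ∉ w := by
          by_contra hcon
          push_neg at hcon
          exact absurd (Finset.card_le_card hcon) (not_le.mpr hlt)
        obtain ⟨j0, hj0, rfl⟩ := (hXmem x0).mp hx0X
        have hx0C : (Sum.inr j0 : Cand β) ∈ Ctot R \ w :=
          Finset.mem_sdiff.mpr ⟨hXC hx0X, hx0w⟩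
        have hx0marg := hmarg_x w hsub j0 hj0 hx0w
        have hmaxsub : maxMarginSet ω W (Ctot R) w ⊆ Xset R := by
          intro c hc
          obtain ⟨hcC, hcmax⟩ := Finset.mem_filter.mp hc
          have hge := hcmax _ hx0C
          rw [hx0marg] at hge
          rcases hmemC c (Finset.mem_sdiff.mp hcC).1 with ⟨r, hr, rfl⟩ | ⟨j, hj, rfl⟩
          · exact absurd hge (not_le.mpr (hmarg_r w hsub r hr))
          · exact (hXmem _).mpr ⟨j, hj, rfl⟩
        obtain ⟨a, ha⟩ := seqNext_nonempty ω pri W ⟨_, hx0C⟩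
        have haM := (Finset.mem_filter.mp ha).1
        have haC : a ∈ Ctot R \ w := (Finset.filter_subset _ _) haM
        have hsN : seqNext ω pri W (Ctot R) w = {a} := by
          apply Finset.eq_singleton_iff_unique_mem.mpr
          refine ⟨ha, fun b hb => ?_⟩
          have hbM := (Finset.mem_filter.mp hb).1
          have hbC : b ∈ Ctot R \ w := (Finset.filter_subset _ _) hbM
          apply hinj (Finset.mem_coe.mpr (Finset.mem_sdiff.mp hbC).1)
            (Finset.mem_coe.mpr (Finset.mem_sdiff.mp haC).1)
          exact le_antisymm ((Finset.mem_filter.mp hb).2 a haM)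
            ((Finset.mem_filter.mp ha).2 b hbM)
        have hstep : seqCommittee ω pri W (Ctot R) (n+1) = w ∪ {a} := by
          rw [seqCommittee, ← hw, hsN]
        constructor
        · rw [hstep]
          intro y hy
          rcases Finset.mem_union.mp hy with h | h
          · exact hsub h
          · rw [Finset.mem_singleton.mp h]
            exact hmaxsub haM
        · rw [hstep, Finset.union_comm, ← Finset.insert_eq,
            Finset.card_insert_of_notMem (Finset.mem_sdiff.mp haC).2, hcard]
    intro r hr hmem
    exact hinlX r ((hinv R.card le_rfl).1 hmem)
  · rintro ⟨V', hV'le, hV'card, hcom⟩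
    rcases Finset.eq_empty_or_nonempty R with hR | hRne
    · refine ⟨∅, Finset.empty_subset _, by simp, ?_⟩
      intro r hr
      rw [hR] at hr
      exact absurd hr (Finset.notMem_empty r)
    set W := votes Ed R B d - V' with hWdef
    have hWle : W ≤ votes Ed R B d := tsub_le_self
    have hred : ∀ r ∈ R, Multiset.card (W.filter fun v => (Sum.inl r : Cand β) ∈ v) < d := by
      intro r hr
      by_contra hge
      push_neg at hge
      have hmargeq : ∀ c : Cand β, marginContrib ω W ∅ c
          = (Multiset.card (W.filter fun v => c ∈ v) : ℝ) * ω 1 := fun c =>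
        marginContrib_eq ω hω0 W ∅ c (fun v _ _ => Finset.inter_empty v)
      have hub : ∀ c ∈ Ctot R, Multiset.card (W.filter fun v => c ∈ v) ≤ d := by
        intro c hc
        calc Multiset.card (W.filter fun v => c ∈ v)
            ≤ Multiset.card ((votes Ed R B d).filter fun v => c ∈ v) :=
              Multiset.card_le_card (Multiset.filter_le_filter _ hWle)
          _ = d := happr_votes c hc
      have hrd : Multiset.card (W.filter fun v => (Sum.inl r : Cand β) ∈ v) = d :=
        le_antisymm (hub _ (hRC r hr)) hge
      have hrC : (Sum.inl r : Cand β) ∈ Ctot R \ (∅ : Finset (Cand β)) := by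
        simpa using hRC r hr
      have hrmax : (Sum.inl r : Cand β) ∈ maxMarginSet ω W (Ctot R) ∅ := by
        rw [maxMarginSet, Finset.mem_filter]
        refine ⟨hrC, fun c' hc' => ?_⟩
        rw [hmargeq, hmargeq, hrd]
        have hc'C : c' ∈ Ctot R := by simpa using hc'
        have hle := hub c' hc'C
        exact mul_le_mul_of_nonneg_right (by exact_mod_cast hle) (le_of_lt hω1)
      obtain ⟨a, ha⟩ := seqNext_nonempty ω pri W (C := Ctot R) (w := ∅) ⟨_, hrC⟩
      have haM := (Finset.mem_filter.mp ha).1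
      have haC : a ∈ Ctot R := by
        have h3 := (Finset.filter_subset _ _) haM
        simpa using (Finset.mem_sdiff.mp h3).1
      have hpa : pri a ≤ pri (Sum.inl r) := (Finset.mem_filter.mp ha).2 _ hrmax
      have hacom : a ∈ seqCommittee ω pri W (Ctot R) R.card := by
        have h1 : a ∈ seqCommittee ω pri W (Ctot R) 1 := by
          have hone : seqCommittee ω pri W (Ctot R) 1
              = (∅ : Finset (Cand β)) ∪ seqNext ω pri W (Ctot R) ∅ := rfl
          rw [hone]
          exact Finset.mem_union_right _ ha
        exact seqCommittee_mono ω pri W (Ctot R) hRne.card_pos h1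
      rcases hmemC a haC with ⟨r', hr', rfl⟩ | ⟨j, hj, rfl⟩
      · exact hcom r' hr' hacom
      · exact absurd hpa (not_le.mpr (hpri r hr j (Finset.mem_range.mpr hj)))
    have hMA : V' ∩ A ≤ B.val.map f := by
      rw [← hA]
      exact Multiset.inter_le_right
    obtain ⟨u, hu, hum⟩ := exists_preimage_of_le_map f hMA
    refine ⟨u.toFinset, ?_, ?_, ?_⟩
    · intro b hb
      exact Multiset.mem_of_le hu (Multiset.mem_toFinset.mp hb)
    · calc u.toFinset.card ≤ Multiset.card u := Multiset.toFinset_card_le u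
        _ = Multiset.card (V' ∩ A) := by rw [← hum, Multiset.card_map]
        _ ≤ Multiset.card V' := Multiset.card_le_card Multiset.inter_le_left
        _ ≤ κ := hV'card
    · intro r hr
      have hvfle : Multiset.filter (fun v => (Sum.inl r : Cand β) ∈ v) V'
          ≤ Multiset.filter (fun v => (Sum.inl r : Cand β) ∈ v) (votes Ed R B d) :=
        Multiset.filter_le_filter _ hV'le
      have hcount : Multiset.card (W.filter fun v => (Sum.inl r : Cand β) ∈ v)
          = d - Multiset.card (V'.filter fun v => (Sum.inl r : Cand β) ∈ v) := by
        rw [hWdef, Multiset.filter_sub, Multiset.card_sub hvfle, happr_votes _ (hRC r hr)]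
      have h1 : 0 < Multiset.card (V'.filter fun v => (Sum.inl r : Cand β) ∈ v) := by
        have h2 := hred r hr
        rw [hcount] at h2
        omega
      obtain ⟨v, hv⟩ := Multiset.card_pos_iff_exists_mem.mp h1
      rw [Multiset.mem_filter] at hv
      obtain ⟨hvV', hrv⟩ := hv
      have hvA : v ∈ A := by
        have h3 := Multiset.mem_of_le hV'le hvV'
        rw [hvotes] at h3
        rcases Multiset.mem_add.mp h3 with h | h
        · exact h
        · obtain ⟨j', _, rfl⟩ := hCxshape v h
          exact absurd (Finset.mem_singleton.mp hrv) (by simp)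
      have hvM : v ∈ V' ∩ A := Multiset.mem_inter.mpr ⟨hvV', hvA⟩
      rw [← hum] at hvM
      obtain ⟨b, hbu, rfl⟩ := Multiset.mem_map.mp hvM
      refine ⟨b, Multiset.mem_toFinset.mpr hbu, ?_⟩
      have hrb : r ∈ nbrB Ed b := by
        rw [hf] at hrv
        obtain ⟨a, ha, h2⟩ := Finset.mem_image.mp hrv
        obtain rfl : a = r := Sum.inl.inj h2
        exact ha
      exact (hnbrB_iff r b).mp hrb


end Stmt15
end

section
/- Let κ ≥ 2 be an even integer and let (A, H) be an RX3C instance: |A| = |H| = 3κ, every member of H is a 3-element subset of A, and every a ∈ A belongs to exactly three members of H. Construct: registered candidates C = A ∪ {p} with p fresh; unregistered candidates D = {c(H) : H ∈ H}; votes V (as subsets of C ∪ D): 9κ²/2 + 1 copies of the vote A, and for each a ∈ A one vote v(a) = {p} ∪ {c(H) : a ∈ H ∈ H}; committee size k = 3κ. Then H contains an exact set cover of A (κ pairwise disjoint members whose union is A) if and only if there exists H' ⊆ H with |H'| ≤ κ such that p is not contained in any SAV winning 3κ-committee of the election on candidate set C ∪ {c(H) : H ∈ H'} whose votes are the votes of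 V restricted to C ∪ {c(H) : H ∈ H'}. -/
open Finset

attribute [local instance] Classical.propDecidable

universe u

variable {α : Type u}

namespace Stmt16

variable {β : Type u} [DecidableEq β]

/-- Candidate type: an element `a ∈ A`, a candidate `c(H)` for `H ∈ 𝓗`, or the
distinguished candidate `p`. -/
abbrev Cand (β : Type u) := β ⊕ Finset β ⊕ Unit

/-- The distinguished candidate `p`. -/
def pc : Cand β := Sum.inr (Sum.inr ())

/-- The candidate `c(H)`. -/
def cH (s : Finset β) : Cand β := Sum.inr (Sum.inl s)

/-- The set of registered candidates `C = A ∪ {p}`. -/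
def Creg (A : Finset β) : Finset (Cand β) := insert pc (A.image Sum.inl)

/-- The votes: `9κ²/2 + 1` copies of the vote `A`, and for each `a ∈ A` the vote
`v(a) = {p} ∪ {c(H) : a ∈ H ∈ 𝓗}`. -/
def votes (A : Finset β) (H : Finset (Finset β)) (κ : ℕ) : Multiset (Finset (Cand β)) :=
  Multiset.replicate (9 * κ ^ 2 / 2 + 1) (A.image Sum.inl)
    + A.val.map (fun a => insert pc ((H.filter fun s => a ∈ s).image cH))


set_option linter.unusedSectionVars false

lemma cH_inj : Function.Injective (cH : Finset β → Cand β) := by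
  intro a b h; simpa [cH] using h

lemma pc_notMem_image_cH (T : Finset (Finset β)) : pc ∉ T.image cH := by
  simp [cH, pc]

lemma inter_image_cH (w : Finset (Cand β)) (T : Finset (Finset β)) :
    w ∩ T.image cH = (T.filter fun s => cH s ∈ w).image cH := by
  ext x
  simp only [mem_inter, mem_image, mem_filter]
  constructor
  · rintro ⟨hw, s, hs, rfl⟩; exact ⟨s, ⟨hs, hw⟩, rfl⟩
  · rintro ⟨s, ⟨hs, hw⟩, rfl⟩; exact ⟨hw, s, hs, rfl⟩

lemma card_inter_image_cH (w : Finset (Cand β)) (T : Finset (Finset β)) :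
    (w ∩ T.image cH).card = (T.filter fun s => cH s ∈ w).card := by
  rw [inter_image_cH, Finset.card_image_of_injective _ cH_inj]

lemma dc (A : Finset β) (H' : Finset (Finset β))
    (h3 : ∀ s ∈ H', s ⊆ A ∧ s.card = 3) (P : Finset β → Prop) [DecidablePred P] :
    ∑ a ∈ A, ((H'.filter fun s => a ∈ s).filter P).card
      = 3 * (H'.filter P).card := by
  have key : ∀ s ∈ H', ∑ a ∈ A, (if a ∈ s ∧ P s then 1 else 0)
      = if P s then 3 else 0 := by
    intro s hs
    by_cases hP : P s
    · simp only [hP, and_true, if_true]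
      rw [← Finset.card_filter]
      have : A.filter (fun a => a ∈ s) = s := by
        ext a
        simp only [mem_filter, and_iff_right_iff_imp]
        exact fun h => (h3 s hs).1 h
      rw [this, (h3 s hs).2]
    · simp [hP]
  calc ∑ a ∈ A, ((H'.filter fun s => a ∈ s).filter P).card
      = ∑ a ∈ A, ∑ s ∈ H', (if a ∈ s ∧ P s then 1 else 0) := by
        refine Finset.sum_congr rfl fun a _ => ?_
        rw [Finset.filter_filter, Finset.card_filter]
    _ = ∑ s ∈ H', ∑ a ∈ A, (if a ∈ s ∧ P s then 1 else 0) := Finset.sum_comm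
    _ = ∑ s ∈ H', (if P s then 3 else 0) := Finset.sum_congr rfl key
    _ = 3 * (H'.filter P).card := by
        rw [Finset.card_filter, Finset.mul_sum]
        exact Finset.sum_congr rfl fun s _ => by split <;> simp
lemma Ncast {κ : ℕ} (h : Even κ) : ((9 * κ ^ 2 / 2 + 1 : ℕ) : ℝ) = 9 * (κ:ℝ) ^ 2 / 2 + 1 := by
  obtain ⟨m, rfl⟩ := h
  have h1 : 9 * (m + m) ^ 2 = 2 * (18 * m ^ 2) := by ring
  rw [h1, Nat.mul_div_cancel_left _ (by norm_num)]
  push_cast; ring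

lemma ineq_fwd (k t s : ℝ) (hk : 2 ≤ k) (ht : 0 ≤ t) (hs0 : 0 ≤ s) (hs : s + t + 1 ≤ 3 * k) :
    (9 * k ^ 2 / 2 + 1) * (s / (3 * k)) + (3 * k + 3 * t) / 2 < 9 * k ^ 2 / 2 + 1 := by
  have hk0 : (0:ℝ) < 3 * k := by linarith
  have h1 : (9 * k ^ 2 / 2 + 1) * (s / (3 * k)) = ((9 * k ^ 2 / 2 + 1) * s) / (3 * k) := by ring
  have h2 : ((9 * k ^ 2 / 2 + 1) * s) / (3 * k) < (9 * k ^ 2 / 2 + 1) - (3 * k + 3 * t) / 2 := by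
    rw [div_lt_iff₀ hk0]
    nlinarith [mul_le_mul_of_nonneg_left hs (show (0:ℝ) ≤ 9 * k ^ 2 / 2 + 1 by nlinarith),
      mul_nonneg (mul_nonneg (show (0:ℝ) ≤ k - 1 by linarith) ht) (show (0:ℝ) ≤ k by linarith),
      mul_nonneg ht (show (0:ℝ) ≤ k by linarith)]
  rw [h1]; linarith

lemma ineq_nop (k t s : ℝ) (hk : 2 ≤ k) (ht : 0 ≤ t) (hs0 : 0 ≤ s) (hs : s + t ≤ 3 * k) :
    (9 * k ^ 2 / 2 + 1) * (s / (3 * k)) + 3 * t ≤ 9 * k ^ 2 / 2 + 1 := by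
  have hk0 : (0:ℝ) < 3 * k := by linarith
  have h1 : (9 * k ^ 2 / 2 + 1) * (s / (3 * k)) = ((9 * k ^ 2 / 2 + 1) * s) / (3 * k) := by ring
  have h2 : ((9 * k ^ 2 / 2 + 1) * s) / (3 * k) ≤ (9 * k ^ 2 / 2 + 1) - 3 * t := by
    rw [div_le_iff₀ hk0]
    nlinarith [mul_le_mul_of_nonneg_left hs (show (0:ℝ) ≤ 9 * k ^ 2 / 2 + 1 by nlinarith),
      mul_nonneg (mul_nonneg (show (0:ℝ) ≤ k - 1 by linarith) ht) (show (0:ℝ) ≤ k by linarith),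
      mul_nonneg ht (show (0:ℝ) ≤ k by linarith)]
  rw [h1]; linarith

lemma ineq_p (k S : ℝ) (hk : 2 ≤ k) (hS : 3 * k / 2 + 1 / 3 ≤ S) :
    9 * k ^ 2 / 2 + 1 < (9 * k ^ 2 / 2 + 1) * ((3 * k - 1) / (3 * k)) + S := by
  have hk0 : (0:ℝ) < 3 * k := by linarith
  have e1 : (9 * k ^ 2 / 2 + 1) * ((3 * k - 1) / (3 * k))
      = (9 * k ^ 2 / 2 + 1) - (3 * k / 2 + 1 / (3 * k)) := by
    field_simp; ring
  rw [e1]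
  have e2 : 1 / (3 * k) < 1 / 3 := by
    rw [div_lt_div_iff₀ hk0 (by norm_num)]; linarith
  linarith

lemma ptwise (n : ℕ) : (4 - (n:ℝ)) / 6 ≤ 1 / ((n:ℝ) + 1) := by
  have h1 : (0:ℝ) < (n:ℝ) + 1 := by positivity
  rw [div_le_div_iff₀ (by norm_num) h1]
  have h2 : (0:ℝ) ≤ ((n:ℝ) - 1) * ((n:ℝ) - 2) := by
    rcases le_or_gt n 1 with h | h
    · interval_cases n <;> norm_num
    · have : (2:ℝ) ≤ (n:ℝ) := by exact_mod_cast h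
      nlinarith
  nlinarith
lemma sum_inv_bound (A : Finset β) (e : β → ℕ) (κ : ℕ) (hA : A.card = 3 * κ) (hκ : 1 ≤ κ)
    (a₀ : β) (ha₀ : a₀ ∈ A) (he0 : e a₀ = 0) (hsum : ∑ a ∈ A, e a ≤ 3 * κ) :
    3 * (κ:ℝ) / 2 + 1 / 3 ≤ ∑ a ∈ A, (1:ℝ) / (e a + 1) := by
  rw [← Finset.add_sum_erase _ _ ha₀, he0]
  have h1 : ∑ a ∈ A.erase a₀, ((4:ℝ) - e a) / 6 ≤ ∑ a ∈ A.erase a₀, (1:ℝ) / (e a + 1) :=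
    Finset.sum_le_sum fun a _ => ptwise (e a)
  have hcard : (A.erase a₀).card = 3 * κ - 1 := by rw [Finset.card_erase_of_mem ha₀, hA]
  have hsum2 : ∑ a ∈ A.erase a₀, e a ≤ 3 * κ := le_trans (Finset.sum_le_sum_of_subset
    (Finset.erase_subset _ _)) hsum
  have h2 : ∑ a ∈ A.erase a₀, ((4:ℝ) - e a) / 6
      = ((A.erase a₀).card * 4 - (∑ a ∈ A.erase a₀, e a : ℕ)) / 6 := by
    rw [← Finset.sum_div, Finset.sum_sub_distrib, Finset.sum_const, nsmul_eq_mul]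
    push_cast
    ring_nf
  have hge : ((3:ℝ) * κ - 1) * 4 - (∑ a ∈ A.erase a₀, e a : ℕ) ≥ 9 * κ - 4 := by
    have : ((∑ a ∈ A.erase a₀, e a : ℕ) : ℝ) ≤ 3 * κ := by exact_mod_cast hsum2
    have hκ' : (1:ℝ) ≤ κ := by exact_mod_cast hκ
    linarith
  have hcast : (((A.erase a₀).card : ℕ) : ℝ) = 3 * (κ:ℝ) - 1 := by
    rw [hcard]
    have : 1 ≤ 3 * κ := by omega
    push_cast [this]
    ring
  have : ((9:ℝ) * κ - 4) / 6 ≤ ∑ a ∈ A.erase a₀, ((4:ℝ) - e a) / 6 := by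
    rw [h2, hcast]
    apply div_le_div_of_nonneg_right ?_ (by norm_num)
    · linarith
  have hfin : (1:ℝ) / ((0:ℕ) + 1) = 1 := by norm_num
  rw [hfin]
  have hκ' : (1:ℝ) ≤ κ := by exact_mod_cast hκ
  linarith
lemma score_formula (κ : ℕ) (A : Finset β) (H H' : Finset (Finset β))
    (hsub : H' ⊆ H) (hA : A.card = 3 * κ) (w : Finset (Cand β)) :
    savScore ((votes A H κ).map (· ∩ (Creg A ∪ H'.image cH))) w
      = ((9 * κ ^ 2 / 2 + 1 : ℕ) : ℝ) * (((w ∩ A.image Sum.inl).card : ℝ) / (3 * (κ:ℝ)))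
        + ∑ a ∈ A, (((w ∩ insert pc ((H'.filter fun s => a ∈ s).image cH)).card : ℝ)
            / (((H'.filter fun s => a ∈ s).card : ℝ) + 1)) := by
  have hgA : (A.image Sum.inl) ∩ (Creg A ∪ H'.image cH) = A.image Sum.inl :=
    Finset.inter_eq_left.2 ((Finset.subset_insert _ _).trans Finset.subset_union_left)
  have hgv : ∀ a : β, (insert pc ((H.filter fun s => a ∈ s).image cH)) ∩ (Creg A ∪ H'.image cH)
      = insert pc ((H'.filter fun s => a ∈ s).image cH) := by
    intro a
    ext x
    simp only [mem_inter, mem_insert, mem_image, mem_filter, mem_union, Creg]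
    constructor
    · rintro ⟨h1, h2⟩
      rcases h1 with rfl | ⟨s, ⟨hsH, has⟩, rfl⟩
      · exact Or.inl rfl
      · refine Or.inr ⟨s, ⟨?_, has⟩, rfl⟩
        rcases h2 with (h2 | ⟨b, hb, hbe⟩) | ⟨s', hs', he⟩
        · exact absurd h2 (by simp [cH, pc])
        · exact absurd hbe (by simp [cH])
        · rwa [← cH_inj he]
    · rintro (rfl | ⟨s, ⟨hs', has⟩, rfl⟩)
      · exact ⟨Or.inl rfl, Or.inl (Or.inl rfl)⟩
      · exact ⟨Or.inr ⟨s, ⟨hsub hs', has⟩, rfl⟩, Or.inr ⟨s, hs', rfl⟩⟩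
  have hA' : ((A.image Sum.inl : Finset (Cand β))).card = 3 * κ := by
    rw [Finset.card_image_of_injective _ Sum.inl_injective, hA]
  have hu : ∀ a : β, (insert pc ((H'.filter fun s => a ∈ s).image cH)).card
      = (H'.filter fun s => a ∈ s).card + 1 := by
    intro a
    rw [Finset.card_insert_of_notMem (pc_notMem_image_cH _),
        Finset.card_image_of_injective _ cH_inj]
  unfold savScore votes
  rw [Multiset.map_map, Multiset.map_add, Multiset.map_replicate, Multiset.sum_add,
      Multiset.sum_replicate, Multiset.map_map]
  congr 1
  · rw [nsmul_eq_mul]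
    congr 1
    show ((w ∩ (((A.image Sum.inl : Finset (Cand β))) ∩ (Creg A ∪ H'.image cH))).card : ℝ)
        / ((((A.image Sum.inl : Finset (Cand β))) ∩ (Creg A ∪ H'.image cH)).card : ℝ) = _
    rw [hgA, hA']
    push_cast
    ring
  · have hsum : ∀ G : β → ℝ, ∑ a ∈ A, G a = (A.val.map G).sum := fun _ => rfl
    rw [hsum]
    refine congrArg Multiset.sum (Multiset.map_congr rfl fun a _ => ?_)
    show ((w ∩ ((insert pc ((H.filter fun s => a ∈ s).image cH)) ∩ (Creg A ∪ H'.image cH))).card : ℝ)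
        / ((((insert pc ((H.filter fun s => a ∈ s).image cH)) ∩ (Creg A ∪ H'.image cH))).card : ℝ) = _
    rw [hgv a, hu a]
    push_cast
    ring
lemma card_split (A : Finset β) (H' : Finset (Finset β)) (w : Finset (Cand β)) :
    (w ∩ (A.image Sum.inl : Finset (Cand β))).card + (w ∩ H'.image cH).card
      + (if pc ∈ w then 1 else 0) ≤ w.card := by
  set u₁ := w ∩ (A.image Sum.inl : Finset (Cand β)) with hu₁
  set u₂ := w ∩ H'.image cH with hu₂
  have d1 : Disjoint u₁ u₂ := by
    rw [Finset.disjoint_left]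
    intro x hx1 hx2
    obtain ⟨a, -, rfl⟩ := Finset.mem_image.1 (Finset.mem_inter.1 hx1).2
    obtain ⟨s, -, h⟩ := Finset.mem_image.1 (Finset.mem_inter.1 hx2).2
    simp [cH] at h
  have hcu : (u₁ ∪ u₂).card = u₁.card + u₂.card := Finset.card_union_of_disjoint d1
  by_cases hp : pc ∈ w
  · have h1 : pc ∉ (A.image Sum.inl : Finset (Cand β)) := by simp [pc]
    have h2 : pc ∉ H'.image cH := pc_notMem_image_cH _
    have hnp : pc ∉ u₁ ∪ u₂ := by simp [hu₁, hu₂, h1, h2]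
    have hsub : insert pc (u₁ ∪ u₂) ⊆ w := by
      intro x hx
      rcases Finset.mem_insert.1 hx with rfl | hx
      · exact hp
      · rcases Finset.mem_union.1 hx with h | h
        · exact (Finset.mem_inter.1 h).1
        · exact (Finset.mem_inter.1 h).1
    have hle := Finset.card_le_card hsub
    rw [Finset.card_insert_of_notMem hnp, hcu] at hle
    simpa [hp] using hle
  · have hsub : u₁ ∪ u₂ ⊆ w :=
      Finset.union_subset Finset.inter_subset_left Finset.inter_subset_left
    have hle := Finset.card_le_card hsub
    rw [hcu] at hle
    simpa [hp] using hle

lemma card_inter_insert_pc (w : Finset (Cand β)) (T : Finset (Finset β)) :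
    (w ∩ insert pc (T.image cH)).card
      = (if pc ∈ w then 1 else 0) + (w ∩ T.image cH).card := by
  rw [Finset.inter_comm w]
  by_cases hp : pc ∈ w
  · rw [Finset.insert_inter_of_mem hp, Finset.card_insert_of_notMem
      (fun h => pc_notMem_image_cH T (Finset.mem_of_mem_inter_left h)),
      Finset.inter_comm]
    simp [hp, add_comm]
  · rw [Finset.insert_inter_of_notMem hp, Finset.inter_comm]
    simp [hp]

lemma sum_m (A : Finset β) (H' : Finset (Finset β))
    (h3 : ∀ s ∈ H', s ⊆ A ∧ s.card = 3) (w : Finset (Cand β)) :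
    ∑ a ∈ A, (w ∩ ((H'.filter fun s => a ∈ s).image cH)).card
      = 3 * (w ∩ H'.image cH).card := by
  calc ∑ a ∈ A, (w ∩ ((H'.filter fun s => a ∈ s).image cH)).card
      = ∑ a ∈ A, ((H'.filter fun s => a ∈ s).filter fun s => cH s ∈ w).card :=
        Finset.sum_congr rfl fun a _ => card_inter_image_cH w _
    _ = 3 * (H'.filter fun s => cH s ∈ w).card := dc A H' h3 _
    _ = 3 * (w ∩ H'.image cH).card := by rw [← card_inter_image_cH]
/-- correctness of the reduction from RX3C to destructive control by
adding candidates for SAV. -/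
theorem dcac_sav (κ : ℕ) (hκ2 : 2 ≤ κ) (hκeven : Even κ)
    (A : Finset β) (H : Finset (Finset β))
    (hA : A.card = 3 * κ) (hHcard : H.card = 3 * κ)
    (hH3 : ∀ s ∈ H, s ⊆ A ∧ s.card = 3)
    (hocc : ∀ a ∈ A, (H.filter fun s => a ∈ s).card = 3) :
    (∃ H' ⊆ H, H'.card = κ ∧ (∀ s ∈ H', ∀ t ∈ H', s ≠ t → Disjoint s t) ∧
        H'.biUnion (fun s => s) = A) ↔
      (∃ H' ⊆ H, H'.card ≤ κ ∧
        ∀ w ∈ savWinners (Creg A ∪ H'.image cH)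
            ((votes A H κ).map (· ∩ (Creg A ∪ H'.image cH))) (3 * κ), pc ∉ w) := by
  classical
  have hκR : (2:ℝ) ≤ (κ:ℝ) := by exact_mod_cast hκ2
  have hk3 : (0:ℝ) < 3 * (κ:ℝ) := by linarith
  have hA'card : ((A.image Sum.inl : Finset (Cand β))).card = 3 * κ := by
    rw [Finset.card_image_of_injective _ Sum.inl_injective, hA]
  have key_scoreA : ∀ H' : Finset (Finset β), H' ⊆ H →
      savScore ((votes A H κ).map (· ∩ (Creg A ∪ H'.image cH)))
        (A.image Sum.inl : Finset (Cand β)) = ((9 * κ ^ 2 / 2 + 1 : ℕ) : ℝ) := by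
    intro H' hsub
    rw [score_formula κ A H H' hsub hA]
    have h0 : ∀ a : β, ((A.image Sum.inl : Finset (Cand β))
        ∩ insert pc ((H'.filter fun s => a ∈ s).image cH)) = ∅ := by
      intro a
      rw [Finset.eq_empty_iff_forall_notMem]
      intro x hx
      obtain ⟨hx1, hx2⟩ := Finset.mem_inter.1 hx
      obtain ⟨b, -, rfl⟩ := Finset.mem_image.1 hx1
      rcases Finset.mem_insert.1 hx2 with h | h
      · simp [pc] at h
      · obtain ⟨s, -, hs⟩ := Finset.mem_image.1 h
        simp [cH] at hs
    have h1 : ∑ a ∈ A, (((A.image Sum.inl : Finset (Cand β))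
        ∩ insert pc ((H'.filter fun s => a ∈ s).image cH)).card : ℝ)
          / (((H'.filter fun s => a ∈ s).card : ℝ) + 1) = 0 := by
      refine Finset.sum_eq_zero fun a _ => ?_
      rw [h0 a]
      simp
    rw [h1, add_zero, Finset.inter_self, hA'card]
    push_cast
    rw [div_self (ne_of_gt hk3), mul_one]
  constructor
  · rintro ⟨H', hsub, hcardκ, hdisj, hunion⟩
    have h3' : ∀ s ∈ H', s ⊆ A ∧ s.card = 3 := fun s hs => hH3 s (hsub hs)
    refine ⟨H', hsub, le_of_eq hcardκ, ?_⟩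
    intro w hw hpw
    simp only [savWinners, Finset.mem_filter] at hw
    obtain ⟨hwP, hwmax⟩ := hw
    obtain ⟨hwsub, hwcard⟩ := Finset.mem_powersetCard.1 hwP
    have hA'mem : (A.image Sum.inl : Finset (Cand β)) ∈
        (Creg A ∪ H'.image cH).powersetCard (3 * κ) :=
      Finset.mem_powersetCard.2
        ⟨(Finset.subset_insert _ _).trans Finset.subset_union_left, hA'card⟩
    have hmaxA := hwmax _ hA'mem
    rw [key_scoreA H' hsub] at hmaxA
    have he1 : ∀ a ∈ A, (H'.filter fun s => a ∈ s).card = 1 := by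
      intro a ha
      have ha' : a ∈ H'.biUnion (fun s => s) := hunion ▸ ha
      obtain ⟨s, hs, has⟩ := Finset.mem_biUnion.1 ha'
      rw [Finset.card_eq_one]
      refine ⟨s, ?_⟩
      ext u
      simp only [Finset.mem_filter, Finset.mem_singleton]
      constructor
      · rintro ⟨hu, hau⟩
        by_contra hne
        exact (Finset.disjoint_left.1 (hdisj u hu s hs hne) hau) has
      · rintro rfl
        exact ⟨hs, has⟩
    have hsplit := card_split A H' w
    rw [if_pos hpw, hwcard] at hsplit
    have hm := sum_m A H' h3' w
    have hscore : savScore ((votes A H κ).map (· ∩ (Creg A ∪ H'.image cH))) w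
        = ((9 * κ ^ 2 / 2 + 1 : ℕ) : ℝ)
            * (((w ∩ (A.image Sum.inl : Finset (Cand β))).card : ℝ) / (3 * (κ:ℝ)))
          + (3 * (κ:ℝ) + 3 * ((w ∩ H'.image cH).card : ℝ)) / 2 := by
      rw [score_formula κ A H H' hsub hA]
      congr 1
      have h1 : ∀ a ∈ A, ((w ∩ insert pc ((H'.filter fun s => a ∈ s).image cH)).card : ℝ)
          / (((H'.filter fun s => a ∈ s).card : ℝ) + 1)
          = (1 + ((w ∩ (H'.filter fun s => a ∈ s).image cH).card : ℝ)) / 2 := by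
        intro a ha
        rw [card_inter_insert_pc, he1 a ha, if_pos hpw]
        push_cast
        norm_num
      rw [Finset.sum_congr rfl h1, ← Finset.sum_div, Finset.sum_add_distrib,
          Finset.sum_const, hA, nsmul_eq_mul, mul_one]
      have h2 : ∑ a ∈ A, ((w ∩ (H'.filter fun s => a ∈ s).image cH).card : ℝ)
          = ((3 * (w ∩ H'.image cH).card : ℕ) : ℝ) := by
        rw [← hm]; push_cast; rfl
      rw [h2]
      push_cast
      ring
    have hlt : savScore ((votes A H κ).map (· ∩ (Creg A ∪ H'.image cH))) w
        < ((9 * κ ^ 2 / 2 + 1 : ℕ) : ℝ) := by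
      rw [hscore, Ncast hκeven]
      exact ineq_fwd (κ:ℝ) _ _ hκR (by positivity) (by positivity)
        (by exact_mod_cast hsplit)
    linarith
  · rintro ⟨H', hsub, hcard, hwin⟩
    have h3' : ∀ s ∈ H', s ⊆ A ∧ s.card = 3 := fun s hs => hH3 s (hsub hs)
    have hesum : ∑ a ∈ A, (H'.filter fun s => a ∈ s).card = 3 * H'.card := by
      have h := dc A H' h3' (fun _ => True)
      simpa using h
    by_cases hall : ∀ a ∈ A, 1 ≤ (H'.filter fun s => a ∈ s).card
    · have hge : 3 * κ ≤ ∑ a ∈ A, (H'.filter fun s => a ∈ s).card := by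
        calc 3 * κ = ∑ _a ∈ A, 1 := by rw [Finset.sum_const, smul_eq_mul, mul_one, hA]
          _ ≤ _ := Finset.sum_le_sum hall
      have hHκ : H'.card = κ := by omega
      have he1 : ∀ a ∈ A, (H'.filter fun s => a ∈ s).card = 1 := by
        intro a ha
        by_contra hne
        have h2 : 2 ≤ (H'.filter fun s => a ∈ s).card := by
          have := hall a ha; omega
        have hrest : (A.erase a).card ≤ ∑ b ∈ A.erase a, (H'.filter fun s => b ∈ s).card := by
          calc (A.erase a).card = ∑ _b ∈ A.erase a, 1 := by
                rw [Finset.sum_const, smul_eq_mul, mul_one]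
            _ ≤ _ := Finset.sum_le_sum fun b hb => hall b (Finset.mem_of_mem_erase hb)
        have htot : (H'.filter fun s => a ∈ s).card
            + ∑ b ∈ A.erase a, (H'.filter fun s => b ∈ s).card
            = ∑ b ∈ A, (H'.filter fun s => b ∈ s).card :=
          Finset.add_sum_erase A (fun b => (H'.filter fun s => b ∈ s).card) ha
        have hce : (A.erase a).card = 3 * κ - 1 := by rw [Finset.card_erase_of_mem ha, hA]
        omega
      refine ⟨H', hsub, hHκ, ?_, ?_⟩
      · intro s hs u hu hsu
        by_contra hnd
        obtain ⟨a, has, hau⟩ := Finset.not_disjoint_iff.1 hnd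
        have haA : a ∈ A := (h3' s hs).1 has
        have hsub2 : ({s, u} : Finset (Finset β)) ⊆ H'.filter fun x => a ∈ x := by
          intro x hx
          rcases Finset.mem_insert.1 hx with rfl | hx
          · exact Finset.mem_filter.2 ⟨hs, has⟩
          · rw [Finset.mem_singleton] at hx; subst hx
            exact Finset.mem_filter.2 ⟨hu, hau⟩
        have h2 := Finset.card_le_card hsub2
        rw [Finset.card_pair hsu, he1 a haA] at h2
        omega
      · ext a
        simp only [Finset.mem_biUnion]
        constructor
        · rintro ⟨s, hs, has⟩; exact (h3' s hs).1 has
        · intro ha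
          have h1 := hall a ha
          obtain ⟨s, hs⟩ := Finset.card_pos.1 (by omega : 0 < (H'.filter fun s => a ∈ s).card)
          exact ⟨s, (Finset.mem_filter.1 hs).1, (Finset.mem_filter.1 hs).2⟩
    · exfalso
      push_neg at hall
      obtain ⟨a₀, ha₀, hlt0⟩ := hall
      have he0 : (H'.filter fun s => a₀ ∈ s).card = 0 := by omega
      set Cf := Creg A ∪ H'.image cH with hCf
      set V' := (votes A H κ).map (· ∩ Cf) with hV'
      set wp : Finset (Cand β) := insert pc ((A.image Sum.inl).erase (Sum.inl a₀)) with hwp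
      have hpcA : pc ∉ (A.image Sum.inl : Finset (Cand β)) := by simp [pc]
      have hpc_not : pc ∉ ((A.image Sum.inl : Finset (Cand β)).erase (Sum.inl a₀)) :=
        fun h => hpcA (Finset.mem_of_mem_erase h)
      have ha₀A' : (Sum.inl a₀ : Cand β) ∈ (A.image Sum.inl : Finset (Cand β)) :=
        Finset.mem_image_of_mem _ ha₀
      have hwpcard : wp.card = 3 * κ := by
        rw [hwp, Finset.card_insert_of_notMem hpc_not, Finset.card_erase_of_mem ha₀A', hA'card]
        omega
      have hwpsub : wp ⊆ Cf := by
        rw [hwp, hCf]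
        refine Finset.insert_subset ?_ ?_
        · exact Finset.mem_union_left _ (Finset.mem_insert_self _ _)
        · exact ((Finset.erase_subset _ _).trans
            ((Finset.subset_insert _ _).trans Finset.subset_union_left))
      have hwpmem : wp ∈ Cf.powersetCard (3 * κ) := Finset.mem_powersetCard.2 ⟨hwpsub, hwpcard⟩
      have hwpA : wp ∩ (A.image Sum.inl : Finset (Cand β))
          = (A.image Sum.inl : Finset (Cand β)).erase (Sum.inl a₀) := by
        rw [hwp, Finset.insert_inter_of_notMem hpcA]
        exact Finset.inter_eq_left.2 (Finset.erase_subset _ _)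
      have hwpu : ∀ a : β, wp ∩ insert pc ((H'.filter fun s => a ∈ s).image cH) = {pc} := by
        intro a
        ext x
        simp only [Finset.mem_inter, Finset.mem_singleton]
        constructor
        · rintro ⟨hx1, hx2⟩
          rcases Finset.mem_insert.1 hx1 with rfl | hx1
          · rfl
          · obtain ⟨b, -, rfl⟩ := Finset.mem_image.1 (Finset.mem_of_mem_erase hx1)
            rcases Finset.mem_insert.1 hx2 with h | h
            · simp [pc] at h
            · obtain ⟨s, -, hs⟩ := Finset.mem_image.1 h
              simp [cH] at hs
        · rintro rfl
          exact ⟨Finset.mem_insert_self _ _, Finset.mem_insert_self _ _⟩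
      have hSge := sum_inv_bound A (fun a => (H'.filter fun s => a ∈ s).card) κ hA
        (by omega) a₀ ha₀ he0 (by rw [hesum]; omega)
      have hwps : savScore V' wp = ((9 * κ ^ 2 / 2 + 1 : ℕ) : ℝ)
            * (((3 * κ - 1 : ℕ) : ℝ) / (3 * (κ:ℝ)))
          + ∑ a ∈ A, (1:ℝ) / (((H'.filter fun s => a ∈ s).card : ℝ) + 1) := by
        rw [hV', hCf, score_formula κ A H H' hsub hA]
        congr 1
        · rw [hwpA, Finset.card_erase_of_mem ha₀A', hA'card]
        · refine Finset.sum_congr rfl fun a _ => ?_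
          rw [hwpu a, Finset.card_singleton]
          norm_num
      have hwpgt : ((9 * κ ^ 2 / 2 + 1 : ℕ) : ℝ) < savScore V' wp := by
        rw [hwps, Ncast hκeven]
        have hcast : ((3 * κ - 1 : ℕ) : ℝ) = 3 * (κ:ℝ) - 1 := by
          have h1 : 1 ≤ 3 * κ := by omega
          push_cast [h1]; ring
        rw [hcast]
        exact ineq_p (κ:ℝ) _ hκR hSge
      obtain ⟨ws, hwsP, hwsmax⟩ := Finset.exists_max_image (Cf.powersetCard (3 * κ))
        (savScore V') ⟨wp, hwpmem⟩
      have hwswin : ws ∈ savWinners Cf V' (3 * κ) := Finset.mem_filter.2 ⟨hwsP, hwsmax⟩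
      have hpcws : pc ∉ ws := hwin ws hwswin
      obtain ⟨hwssub, hwscard⟩ := Finset.mem_powersetCard.1 hwsP
      have hsplit := card_split A H' ws
      rw [if_neg hpcws, hwscard, add_zero] at hsplit
      have hm := sum_m A H' h3' ws
      have hub : savScore V' ws ≤ ((9 * κ ^ 2 / 2 + 1 : ℕ) : ℝ) := by
        rw [hV', hCf, score_formula κ A H H' hsub hA]
        have h1 : ∀ a ∈ A, ((ws ∩ insert pc ((H'.filter fun s => a ∈ s).image cH)).card : ℝ)
            / (((H'.filter fun s => a ∈ s).card : ℝ) + 1)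
            ≤ ((ws ∩ (H'.filter fun s => a ∈ s).image cH).card : ℝ) := by
          intro a ha
          rw [card_inter_insert_pc, if_neg hpcws, zero_add]
          apply div_le_self (by positivity)
          have h0 : (0:ℝ) ≤ ((H'.filter fun s => a ∈ s).card : ℝ) := by positivity
          linarith
        have h2 : ∑ a ∈ A, ((ws ∩ insert pc ((H'.filter fun s => a ∈ s).image cH)).card : ℝ)
            / (((H'.filter fun s => a ∈ s).card : ℝ) + 1)
            ≤ 3 * ((ws ∩ H'.image cH).card : ℝ) := by
          calc ∑ a ∈ A, ((ws ∩ insert pc ((H'.filter fun s => a ∈ s).image cH)).card : ℝ)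
                / (((H'.filter fun s => a ∈ s).card : ℝ) + 1)
              ≤ ∑ a ∈ A, ((ws ∩ (H'.filter fun s => a ∈ s).image cH).card : ℝ) :=
                Finset.sum_le_sum h1
            _ = ((∑ a ∈ A, (ws ∩ (H'.filter fun s => a ∈ s).image cH).card : ℕ) : ℝ) := by
                push_cast; rfl
            _ = 3 * ((ws ∩ H'.image cH).card : ℝ) := by rw [hm]; push_cast; ring
        have h3 := ineq_nop (κ:ℝ) (((ws ∩ H'.image cH).card : ℕ) : ℝ)
          (((ws ∩ (A.image Sum.inl : Finset (Cand β))).card : ℕ) : ℝ) hκR (by positivity)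
          (by positivity) (by exact_mod_cast hsplit)
        rw [Ncast hκeven]
        linarith
      have hle := hwsmax wp hwpmem
      linarith

end Stmt16
end

section
/- Let ω be a Thiele function with ω(2) < 2ω(1), and let (A, H, κ) be a Regular Set Packing instance: A a finite set, H a finite collection of d-element subsets of A for some d ≥ 1, and κ ≥ 1 an integer. Construct: registered candidates C = X ∪ {p}, where p is fresh and X is a set of κ fresh candidates; unregistered candidates D = {c(H) : H ∈ H}; votes V: d copies of the vote {p} and, for each a ∈ A, one vote v(a) = {c(H) : a ∈ H ∈ H}; committee size k = κ; and a tie-breaking linear order ⊳ placing all candidates c(H) first, then p, then all of X. Then H contains κ pairwise disjoint sets if and only if there exists H' ⊆ H with |H'| ≤ κ such that p is not contained in the seqω winning κ-committee, with respect to ⊳, of the election on candidate set C ∪ {c(H) : H ∈ H'} whose votes are the votes of V restricted to C ∪ {c(H) : H ∈ H'}. -/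
open Finset

attribute [local instance] Classical.propDecidable

universe u

variable {α : Type u}

namespace Stmt17

variable {β : Type u} [DecidableEq β]

/-- Candidate type: a candidate `c(H)` for `H ∈ 𝓗`, a fresh candidate of the set `X`,
or the distinguished candidate `p`. -/
abbrev Cand (β : Type u) := Finset β ⊕ ℕ ⊕ Unit

/-- The distinguished candidate `p`. -/
def pc : Cand β := Sum.inr (Sum.inr ())

/-- The candidate `c(H)`. -/
def cH (s : Finset β) : Cand β := Sum.inl s

/-- The set `X` of `κ` fresh candidates. -/
def Xset (κ : ℕ) : Finset (Cand β) :=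
  (Finset.range κ).image fun j => (Sum.inr (Sum.inl j) : Cand β)

/-- The set of registered candidates `C = X ∪ {p}`. -/
def Creg (κ : ℕ) : Finset (Cand β) := insert pc (Xset κ)

/-- The candidate set after adding the candidates of `𝓗'`. -/
def Cfull (κ : ℕ) (H' : Finset (Finset β)) : Finset (Cand β) :=
  Creg κ ∪ H'.image cH

/-- The votes: `d` copies of `{p}` and, for each `a ∈ A`, the vote
`v(a) = {c(H) : a ∈ H ∈ 𝓗}`. -/
def votes (A : Finset β) (H : Finset (Finset β)) (d : ℕ) : Multiset (Finset (Cand β)) :=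
  Multiset.replicate d ({pc} : Finset (Cand β))
    + A.val.map (fun a => (H.filter fun s => a ∈ s).image cH)

/-! ### Auxiliary lemmas -/

lemma cH_inj : Function.Injective (cH : Finset β → Cand β) := fun a b h => by
  simpa [cH] using h

lemma pc_mem_Cfull (κ : ℕ) (H' : Finset (Finset β)) : (pc : Cand β) ∈ Cfull κ H' :=
  Finset.mem_union_left _ (Finset.mem_insert_self _ _)

lemma pc_not_mem_image (S : Finset (Finset β)) : (pc : Cand β) ∉ S.image cH := by
  simp [pc, cH]

lemma cH_mem_image {S : Finset (Finset β)} {s : Finset β} :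
    (cH s : Cand β) ∈ S.image cH ↔ s ∈ S :=
  cH_inj.mem_finset_image

lemma cH_mem_Cfull {κ : ℕ} {H' : Finset (Finset β)} {s : Finset β} (hs : s ∈ H') :
    (cH s : Cand β) ∈ Cfull κ H' :=
  Finset.mem_union_right _ (Finset.mem_image_of_mem _ hs)

lemma thieleScore_add (ω : ℕ → ℝ) (V₁ V₂ : Multiset (Finset (Cand β))) (w : Finset (Cand β)) :
    thieleScore ω (V₁ + V₂) w = thieleScore ω V₁ w + thieleScore ω V₂ w := by
  simp [thieleScore]

lemma marginContrib_add (ω : ℕ → ℝ) (V₁ V₂ : Multiset (Finset (Cand β))) (w : Finset (Cand β))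
    (c : Cand β) :
    marginContrib ω (V₁ + V₂) w c = marginContrib ω V₁ w c + marginContrib ω V₂ w c := by
  simp only [marginContrib, thieleScore_add]; ring

lemma thieleScore_replicate (ω : ℕ → ℝ) (d : ℕ) (v : Finset (Cand β)) (w : Finset (Cand β)) :
    thieleScore ω (Multiset.replicate d v) w = d * ω ((v ∩ w).card) := by
  simp [thieleScore, Multiset.map_replicate]

lemma thieleScore_mapA (ω : ℕ → ℝ) (A : Finset β) (f : β → Finset (Cand β))
    (w : Finset (Cand β)) :
    thieleScore ω (A.val.map f) w = ∑ a ∈ A, ω ((f a ∩ w).card) := by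
  simp only [thieleScore, Multiset.map_map, Function.comp]
  rfl

lemma marginContrib_mapA (ω : ℕ → ℝ) (A : Finset β) (f : β → Finset (Cand β))
    (w : Finset (Cand β)) (c : Cand β) :
    marginContrib ω (A.val.map f) w c
      = ∑ a ∈ A, (ω ((f a ∩ insert c w).card) - ω ((f a ∩ w).card)) := by
  simp [marginContrib, thieleScore_mapA, Finset.sum_sub_distrib]

lemma marginContrib_of_not_mem (ω : ℕ → ℝ) (V : Multiset (Finset (Cand β)))
    (w : Finset (Cand β)) (c : Cand β) (hc : ∀ v ∈ V, c ∉ v) :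
    marginContrib ω V w c = 0 := by
  have : thieleScore ω V (insert c w) = thieleScore ω V w := by
    unfold thieleScore
    congr 1
    apply Multiset.map_congr rfl
    intro v hv
    rw [Finset.inter_insert_of_notMem (hc v hv)]
  simp [marginContrib, this]

lemma votesR (A : Finset β) (H H' : Finset (Finset β)) (hH' : H' ⊆ H) (d κ : ℕ) :
    (votes A H d).map (· ∩ Cfull κ H') =
      Multiset.replicate d ({pc} : Finset (Cand β))
        + A.val.map (fun a => (H'.filter fun s => a ∈ s).image cH) := by
  unfold votes
  rw [Multiset.map_add, Multiset.map_replicate, Multiset.map_map]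
  congr 1
  · congr 1
    exact Finset.inter_eq_left.mpr (Finset.singleton_subset_iff.mpr (pc_mem_Cfull κ H'))
  · apply Multiset.map_congr rfl
    intro a _
    show ((H.filter fun s => a ∈ s).image cH) ∩ Cfull κ H'
        = (H'.filter fun s => a ∈ s).image cH
    ext c
    simp only [Finset.mem_inter, Finset.mem_image, Finset.mem_filter, Cfull, Creg, Xset,
      Finset.mem_union, Finset.mem_insert, Finset.mem_range, pc, cH]
    constructor
    · rintro ⟨⟨s, ⟨hsH, ha⟩, rfl⟩, hc⟩
      rcases hc with (h | h) | ⟨t, htH', ht⟩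
      · exact absurd h (by simp)
      · rcases h with ⟨x, _, hx⟩; exact absurd hx (by simp)
      · exact ⟨t, ⟨htH', by rw [Sum.inl.inj ht]; exact ha⟩, ht⟩
    · rintro ⟨s, ⟨hsH', ha⟩, rfl⟩
      exact ⟨⟨s, ⟨hH' hsH', ha⟩, rfl⟩, Or.inr ⟨s, hsH', rfl⟩⟩

lemma filter_inter_image (H' T : Finset (Finset β)) (hT : T ⊆ H') (a : β) :
    ((H'.filter fun t => a ∈ t).image cH) ∩ T.image cH
      = (T.filter fun t => a ∈ t).image cH := by
  rw [← Finset.image_inter _ _ cH_inj, Finset.filter_inter, Finset.inter_eq_right.mpr hT]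

lemma voteA_inter_w (H' S : Finset (Finset β)) (hS : S ⊆ H') (a : β) :
    (((H'.filter fun t => a ∈ t).image cH) ∩ S.image cH).card
      = (S.filter fun t => a ∈ t).card := by
  rw [filter_inter_image H' S hS a, Finset.card_image_of_injective _ cH_inj]

lemma voteA_inter_insert (H' S : Finset (Finset β)) (hS : S ⊆ H') {s : Finset β}
    (hs : s ∈ H') (hsS : s ∉ S) (a : β) :
    (((H'.filter fun t => a ∈ t).image cH) ∩ insert (cH s) (S.image cH)).card
      = (if a ∈ s then 1 else 0) + (S.filter fun t => a ∈ t).card := by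
  rw [← Finset.image_insert, filter_inter_image H' (insert s S) (Finset.insert_subset hs hS) a,
    Finset.card_image_of_injective _ cH_inj, Finset.filter_insert]
  by_cases ha : a ∈ s
  · rw [if_pos ha, if_pos ha,
      Finset.card_insert_of_notMem (fun h => hsS (Finset.mem_filter.mp h).1)]
    omega
  · rw [if_neg ha, if_neg ha, zero_add]

lemma margin_replicate_pc (ω : ℕ → ℝ) (hω0 : ω 0 = 0) (d : ℕ) (w : Finset (Cand β))
    (hw : pc ∉ w) :
    marginContrib ω (Multiset.replicate d ({pc} : Finset (Cand β))) w pc = d * ω 1 := by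
  unfold marginContrib
  rw [thieleScore_replicate, thieleScore_replicate,
    Finset.singleton_inter_of_mem (Finset.mem_insert_self _ _),
    Finset.singleton_inter_of_notMem hw]
  simp [hω0]

lemma margin_replicate_other (ω : ℕ → ℝ) (d : ℕ) (w : Finset (Cand β)) (c : Cand β)
    (hc : c ≠ pc) :
    marginContrib ω (Multiset.replicate d ({pc} : Finset (Cand β))) w c = 0 := by
  apply marginContrib_of_not_mem
  intro v hv
  rw [Multiset.eq_of_mem_replicate hv]
  simp [hc]

lemma margin_mapA_pc (ω : ℕ → ℝ) (A : Finset β) (H' : Finset (Finset β))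
    (w : Finset (Cand β)) :
    marginContrib ω (A.val.map (fun a => (H'.filter fun t => a ∈ t).image cH)) w pc = 0 := by
  apply marginContrib_of_not_mem
  intro v hv
  obtain ⟨a, _, rfl⟩ := Multiset.mem_map.mp hv
  exact pc_not_mem_image _

lemma margin_pc_total (ω : ℕ → ℝ) (hω0 : ω 0 = 0) (A : Finset β)
    (H' S : Finset (Finset β)) (d : ℕ) :
    marginContrib ω
      (Multiset.replicate d ({pc} : Finset (Cand β))
        + A.val.map (fun a => (H'.filter fun t => a ∈ t).image cH)) (S.image cH) pc
      = d * ω 1 := by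
  rw [marginContrib_add, margin_replicate_pc ω hω0 d _ (pc_not_mem_image S),
    margin_mapA_pc, add_zero]

lemma margin_X_total (ω : ℕ → ℝ) (A : Finset β) (H' : Finset (Finset β)) (d : ℕ)
    (w : Finset (Cand β)) (j : ℕ) :
    marginContrib ω
      (Multiset.replicate d ({pc} : Finset (Cand β))
        + A.val.map (fun a => (H'.filter fun t => a ∈ t).image cH)) w
      (Sum.inr (Sum.inl j)) = 0 := by
  apply marginContrib_of_not_mem
  intro v hv
  rcases Multiset.mem_add.mp hv with h | h
  · rw [Multiset.eq_of_mem_replicate h]; simp [pc]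
  · obtain ⟨a, _, rfl⟩ := Multiset.mem_map.mp h
    simp [cH]

lemma margin_cH_formula (ω : ℕ → ℝ) (A : Finset β) (H' S : Finset (Finset β)) (d : ℕ)
    (hS : S ⊆ H') {s : Finset β} (hs : s ∈ H') (hsS : s ∉ S) (hsA : s ⊆ A) :
    marginContrib ω
      (Multiset.replicate d ({pc} : Finset (Cand β))
        + A.val.map (fun a => (H'.filter fun t => a ∈ t).image cH)) (S.image cH) (cH s)
      = ∑ a ∈ s, (ω (1 + (S.filter fun t => a ∈ t).card)
          - ω ((S.filter fun t => a ∈ t).card)) := by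
  rw [marginContrib_add, margin_replicate_other ω d _ _ (by simp [pc, cH]), zero_add,
    marginContrib_mapA]
  rw [← Finset.sum_subset hsA (fun a _ ha => by
    rw [voteA_inter_insert H' S hS hs hsS a, voteA_inter_w H' S hS a, if_neg ha, zero_add,
      sub_self])]
  apply Finset.sum_congr rfl
  intro a ha
  rw [voteA_inter_insert H' S hS hs hsS a, voteA_inter_w H' S hS a, if_pos ha]

lemma n_le_one (S : Finset (Finset β))
    (hdisj : ∀ t₁ ∈ S, ∀ t₂ ∈ S, t₁ ≠ t₂ → Disjoint t₁ t₂) (a : β) :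
    (S.filter fun t => a ∈ t).card ≤ 1 := by
  apply Finset.card_le_one.mpr
  intro t₁ h₁ t₂ h₂
  rcases Finset.mem_filter.mp h₁ with ⟨ht₁, ha₁⟩
  rcases Finset.mem_filter.mp h₂ with ⟨ht₂, ha₂⟩
  by_contra hne
  exact Finset.disjoint_left.mp (hdisj t₁ ht₁ t₂ ht₂ hne) ha₁ ha₂

lemma term_le (ω : ℕ → ℝ) (hω0 : ω 0 = 0) (hω : ω 2 < 2 * ω 1) {n : ℕ} (hn : n ≤ 1) :
    ω (1 + n) - ω n ≤ ω 1 := by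
  interval_cases n
  · simp [hω0]
  · show ω 2 - ω 1 ≤ ω 1
    linarith

lemma margin_cH_le (ω : ℕ → ℝ) (hω0 : ω 0 = 0) (hω : ω 2 < 2 * ω 1) (A : Finset β)
    (H' S : Finset (Finset β)) (d : ℕ)
    (hS : S ⊆ H') {s : Finset β} (hs : s ∈ H') (hsS : s ∉ S) (hsA : s ⊆ A)
    (hcard : s.card = d)
    (hdisj : ∀ t₁ ∈ S, ∀ t₂ ∈ S, t₁ ≠ t₂ → Disjoint t₁ t₂) :
    marginContrib ω
      (Multiset.replicate d ({pc} : Finset (Cand β))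
        + A.val.map (fun a => (H'.filter fun t => a ∈ t).image cH)) (S.image cH) (cH s)
      ≤ d * ω 1 := by
  rw [margin_cH_formula ω A H' S d hS hs hsS hsA]
  calc ∑ a ∈ s, (ω (1 + (S.filter fun t => a ∈ t).card)
          - ω ((S.filter fun t => a ∈ t).card))
      ≤ ∑ _a ∈ s, ω 1 :=
        Finset.sum_le_sum (fun a _ => term_le ω hω0 hω (n_le_one S hdisj a))
    _ = d * ω 1 := by rw [Finset.sum_const, hcard, nsmul_eq_mul]

lemma margin_cH_eq (ω : ℕ → ℝ) (hω0 : ω 0 = 0) (A : Finset β)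
    (H' S : Finset (Finset β)) (d : ℕ)
    (hS : S ⊆ H') {s : Finset β} (hs : s ∈ H') (hsS : s ∉ S) (hsA : s ⊆ A)
    (hcard : s.card = d) (hdisjall : ∀ t ∈ S, Disjoint s t) :
    marginContrib ω
      (Multiset.replicate d ({pc} : Finset (Cand β))
        + A.val.map (fun a => (H'.filter fun t => a ∈ t).image cH)) (S.image cH) (cH s)
      = d * ω 1 := by
  rw [margin_cH_formula ω A H' S d hS hs hsS hsA]
  have h0 : ∀ a ∈ s, (S.filter fun t => a ∈ t) = ∅ := by
    intro a ha
    apply Finset.filter_eq_empty_iff.mpr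
    intro t ht hat
    exact Finset.disjoint_left.mp (hdisjall t ht) ha hat
  calc ∑ a ∈ s, (ω (1 + (S.filter fun t => a ∈ t).card)
          - ω ((S.filter fun t => a ∈ t).card))
      = ∑ _a ∈ s, ω 1 := by
        apply Finset.sum_congr rfl
        intro a ha
        rw [h0 a ha]
        simp [hω0]
    _ = d * ω 1 := by rw [Finset.sum_const, hcard, nsmul_eq_mul]

lemma margin_cH_lt (ω : ℕ → ℝ) (hω0 : ω 0 = 0) (hω : ω 2 < 2 * ω 1) (A : Finset β)
    (H' S : Finset (Finset β)) (d : ℕ)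
    (hS : S ⊆ H') {s : Finset β} (hs : s ∈ H') (hsS : s ∉ S) (hsA : s ⊆ A)
    (hcard : s.card = d)
    (hdisj : ∀ t₁ ∈ S, ∀ t₂ ∈ S, t₁ ≠ t₂ → Disjoint t₁ t₂)
    (hbad : ¬ ∀ t ∈ S, Disjoint s t) :
    marginContrib ω
      (Multiset.replicate d ({pc} : Finset (Cand β))
        + A.val.map (fun a => (H'.filter fun t => a ∈ t).image cH)) (S.image cH) (cH s)
      < d * ω 1 := by
  rw [margin_cH_formula ω A H' S d hS hs hsS hsA]
  push_neg at hbad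
  obtain ⟨t, htS, hnd⟩ := hbad
  obtain ⟨a₀, ha₀s, ha₀t⟩ := Finset.not_disjoint_iff.mp hnd
  have hn1 : (S.filter fun t => a₀ ∈ t).card = 1 := by
    have h1 : t ∈ S.filter fun t => a₀ ∈ t := Finset.mem_filter.mpr ⟨htS, ha₀t⟩
    have := n_le_one S hdisj a₀
    have := Finset.card_pos.mpr ⟨t, h1⟩
    omega
  have hlt : ∑ a ∈ s, (ω (1 + (S.filter fun t => a ∈ t).card)
          - ω ((S.filter fun t => a ∈ t).card)) < ∑ _a ∈ s, ω 1 := by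
    apply Finset.sum_lt_sum
    · exact fun a _ => term_le ω hω0 hω (n_le_one S hdisj a)
    · refine ⟨a₀, ha₀s, ?_⟩
      rw [hn1]
      show ω 2 - ω 1 < ω 1
      linarith
  calc _ < ∑ _a ∈ s, ω 1 := hlt
    _ = d * ω 1 := by rw [Finset.sum_const, hcard, nsmul_eq_mul]

lemma mem_C_sdiff (κ : ℕ) (H' S : Finset (Finset β)) (c : Cand β) :
    c ∈ Cfull κ H' \ S.image cH ↔
      c = pc ∨ (∃ j < κ, c = Sum.inr (Sum.inl j)) ∨ ∃ s, (s ∈ H' ∧ s ∉ S) ∧ c = cH s := by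
  rw [Finset.mem_sdiff]
  constructor
  · rintro ⟨hc, hw⟩
    rcases Finset.mem_union.mp hc with hc | hc
    · rcases Finset.mem_insert.mp hc with rfl | hc
      · exact Or.inl rfl
      · obtain ⟨j, hj, rfl⟩ := Finset.mem_image.mp hc
        exact Or.inr (Or.inl ⟨j, Finset.mem_range.mp hj, rfl⟩)
    · obtain ⟨s, hs, rfl⟩ := Finset.mem_image.mp hc
      exact Or.inr (Or.inr ⟨s, ⟨hs, fun h => hw (Finset.mem_image_of_mem _ h)⟩, rfl⟩)
  · rintro (rfl | ⟨j, hj, rfl⟩ | ⟨s, ⟨hs, hsS⟩, rfl⟩)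
    · exact ⟨pc_mem_Cfull κ H', pc_not_mem_image S⟩
    · refine ⟨Finset.mem_union_left _ (Finset.mem_insert_of_mem ?_), by simp [cH]⟩
      exact Finset.mem_image_of_mem _ (Finset.mem_range.mpr hj)
    · exact ⟨cH_mem_Cfull hs, fun h => hsS (cH_mem_image.mp h)⟩

lemma maxMarginSet_eq (ω : ℕ → ℝ) (hω0 : ω 0 = 0) (hmono : ∀ i, ω i ≤ ω (i + 1))
    (hω : ω 2 < 2 * ω 1)
    (A : Finset β) (H H' S : Finset (Finset β)) (d : ℕ) (hd : 1 ≤ d)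
    (hH : ∀ s ∈ H, s ⊆ A ∧ s.card = d) (κ : ℕ)
    (hH' : H' ⊆ H) (hS : S ⊆ H')
    (hdisj : ∀ t₁ ∈ S, ∀ t₂ ∈ S, t₁ ≠ t₂ → Disjoint t₁ t₂) :
    maxMarginSet ω
      (Multiset.replicate d ({pc} : Finset (Cand β))
        + A.val.map (fun a => (H'.filter fun t => a ∈ t).image cH))
      (Cfull κ H') (S.image cH)
      = insert pc (((H' \ S).filter fun s => ∀ t ∈ S, Disjoint s t).image cH) := by
  set V := Multiset.replicate d ({pc} : Finset (Cand β))
        + A.val.map (fun a => (H'.filter fun t => a ∈ t).image cH) with hV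
  have hω1 : 0 < ω 1 := by have := hmono 1; have := hmono 0; simp [hω0] at *; linarith
  have hdω1 : 0 < (d : ℝ) * ω 1 := by
    apply mul_pos _ hω1
    exact_mod_cast Nat.lt_of_lt_of_le Nat.zero_lt_one hd
  have hub : ∀ c ∈ Cfull κ H' \ S.image cH, marginContrib ω V (S.image cH) c ≤ d * ω 1 := by
    intro c hc
    rcases (mem_C_sdiff κ H' S c).mp hc with rfl | ⟨j, _, rfl⟩ | ⟨s, ⟨hs, hsS⟩, rfl⟩
    · rw [margin_pc_total ω hω0 A H' S d]
    · rw [margin_X_total ω A H' d _ j]; linarith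
    · exact margin_cH_le ω hω0 hω A H' S d hS hs hsS (hH s (hH' hs)).1 (hH s (hH' hs)).2 hdisj
  have hpcmem : pc ∈ Cfull κ H' \ S.image cH :=
    Finset.mem_sdiff.mpr ⟨pc_mem_Cfull κ H', pc_not_mem_image S⟩
  have hpcmargin : marginContrib ω V (S.image cH) pc = d * ω 1 := margin_pc_total ω hω0 A H' S d
  ext c
  rw [maxMarginSet, Finset.mem_filter]
  constructor
  · rintro ⟨hc, hmax⟩
    have h1 : (d : ℝ) * ω 1 ≤ marginContrib ω V (S.image cH) c := by
      have := hmax pc hpcmem; rwa [hpcmargin] at this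
    rcases (mem_C_sdiff κ H' S c).mp hc with rfl | ⟨j, _, rfl⟩ | ⟨s, ⟨hs, hsS⟩, rfl⟩
    · exact Finset.mem_insert_self _ _
    · rw [margin_X_total ω A H' d _ j] at h1; linarith
    · apply Finset.mem_insert_of_mem
      apply Finset.mem_image_of_mem
      rw [Finset.mem_filter, Finset.mem_sdiff]
      refine ⟨⟨hs, hsS⟩, ?_⟩
      by_contra hbad
      have := margin_cH_lt ω hω0 hω A H' S d hS hs hsS (hH s (hH' hs)).1 (hH s (hH' hs)).2
        hdisj hbad
      linarith
  · intro hc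
    rcases Finset.mem_insert.mp hc with rfl | hc
    · refine ⟨hpcmem, ?_⟩
      intro c' hc'
      rw [hpcmargin]
      exact hub c' hc'
    · obtain ⟨s, hsD, rfl⟩ := Finset.mem_image.mp hc
      rcases Finset.mem_filter.mp hsD with ⟨hsd, hall⟩
      rcases Finset.mem_sdiff.mp hsd with ⟨hs, hsS⟩
      have heq : marginContrib ω V (S.image cH) (cH s) = d * ω 1 :=
        margin_cH_eq ω hω0 A H' S d hS hs hsS (hH s (hH' hs)).1 (hH s (hH' hs)).2 hall
      refine ⟨(mem_C_sdiff κ H' S _).mpr (Or.inr (Or.inr ⟨s, ⟨hs, hsS⟩, rfl⟩)), ?_⟩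
      intro c' hc'
      rw [heq]
      exact hub c' hc'

lemma seqNext_eq_pc (ω : ℕ → ℝ) (hω0 : ω 0 = 0) (hmono : ∀ i, ω i ≤ ω (i + 1))
    (hω : ω 2 < 2 * ω 1) (pri : Cand β → ℕ)
    (A : Finset β) (H H' S : Finset (Finset β)) (d : ℕ) (hd : 1 ≤ d)
    (hH : ∀ s ∈ H, s ⊆ A ∧ s.card = d) (κ : ℕ)
    (hH' : H' ⊆ H) (hS : S ⊆ H')
    (hdisj : ∀ t₁ ∈ S, ∀ t₂ ∈ S, t₁ ≠ t₂ → Disjoint t₁ t₂)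
    (hD : ((H' \ S).filter fun s => ∀ t ∈ S, Disjoint s t) = ∅) :
    seqNext ω pri
      (Multiset.replicate d ({pc} : Finset (Cand β))
        + A.val.map (fun a => (H'.filter fun t => a ∈ t).image cH))
      (Cfull κ H') (S.image cH) = {pc} := by
  unfold seqNext
  rw [maxMarginSet_eq ω hω0 hmono hω A H H' S d hd hH κ hH' hS hdisj, hD]
  simp only [Finset.image_empty, insert_empty_eq]
  rw [Finset.filter_eq_self.mpr]
  intro c hc
  rw [Finset.mem_singleton] at hc
  subst hc
  intro c' hc'
  rw [Finset.mem_singleton] at hc'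
  subst hc'
  exact le_refl _

lemma seqNext_eq_cH (ω : ℕ → ℝ) (hω0 : ω 0 = 0) (hmono : ∀ i, ω i ≤ ω (i + 1))
    (hω : ω 2 < 2 * ω 1) (pri : Cand β → ℕ)
    (A : Finset β) (H H' S : Finset (Finset β)) (d : ℕ) (hd : 1 ≤ d)
    (hH : ∀ s ∈ H, s ⊆ A ∧ s.card = d) (κ : ℕ)
    (hinj : Set.InjOn pri (Cfull κ H : Set (Cand β)))
    (hpri1 : ∀ s ∈ H, pri (cH s : Cand β) < pri pc)
    (hH' : H' ⊆ H) (hS : S ⊆ H')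
    (hdisj : ∀ t₁ ∈ S, ∀ t₂ ∈ S, t₁ ≠ t₂ → Disjoint t₁ t₂)
    {s₀ : Finset β} (hs₀ : s₀ ∈ (H' \ S).filter fun s => ∀ t ∈ S, Disjoint s t)
    (hmin : ∀ s ∈ (H' \ S).filter fun s => ∀ t ∈ S, Disjoint s t,
      pri (cH s₀ : Cand β) ≤ pri (cH s)) :
    seqNext ω pri
      (Multiset.replicate d ({pc} : Finset (Cand β))
        + A.val.map (fun a => (H'.filter fun t => a ∈ t).image cH))
      (Cfull κ H') (S.image cH) = {cH s₀} := by
  have hs₀H' : s₀ ∈ H' := (Finset.mem_sdiff.mp (Finset.mem_filter.mp hs₀).1).1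
  unfold seqNext
  rw [maxMarginSet_eq ω hω0 hmono hω A H H' S d hd hH κ hH' hS hdisj]
  set D := (H' \ S).filter fun s => ∀ t ∈ S, Disjoint s t with hDdef
  have hs₀M : (cH s₀ : Cand β) ∈ insert pc (D.image cH) :=
    Finset.mem_insert_of_mem (Finset.mem_image_of_mem _ hs₀)
  ext c
  rw [Finset.mem_filter, Finset.mem_singleton]
  constructor
  · rintro ⟨hcM, hcmin⟩
    rcases Finset.mem_insert.mp hcM with rfl | hc
    · exfalso
      have h1 := hcmin (cH s₀) hs₀M
      have h2 := hpri1 s₀ (hH' hs₀H')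
      omega
    · obtain ⟨s, hsD, rfl⟩ := Finset.mem_image.mp hc
      have hsH' : s ∈ H' := (Finset.mem_sdiff.mp (Finset.mem_filter.mp hsD).1).1
      have h1 := hcmin (cH s₀) hs₀M
      have h2 := hmin s hsD
      exact hinj (Finset.mem_coe.mpr (cH_mem_Cfull (H' := H) (hH' hsH')))
        (Finset.mem_coe.mpr (cH_mem_Cfull (H' := H) (hH' hs₀H'))) (le_antisymm h1 h2)
  · rintro rfl
    refine ⟨hs₀M, ?_⟩
    intro c' hc'
    rcases Finset.mem_insert.mp hc' with rfl | hc'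
    · exact le_of_lt (hpri1 s₀ (hH' hs₀H'))
    · obtain ⟨s, hsD, rfl⟩ := Finset.mem_image.mp hc'
      exact hmin s hsD

lemma seqCommittee_mono (ω : ℕ → ℝ) (pri : Cand β → ℕ) (V : Multiset (Finset (Cand β)))
    (C : Finset (Cand β)) {i j : ℕ} (hij : i ≤ j) :
    seqCommittee ω pri V C i ⊆ seqCommittee ω pri V C j := by
  induction j with
  | zero => rw [Nat.le_zero.mp hij]
  | succ j ih =>
    rcases Nat.lt_or_ge i (j + 1) with h | h
    · exact (ih (Nat.lt_succ_iff.mp h)).trans Finset.subset_union_left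
    · rw [Nat.le_antisymm hij h]

/-- correctness of the reduction from Regular Set Packing to destructive
control by adding candidates for sequential ω-Thiele rules with `ω(2) < 2ω(1)`. -/
theorem dcac_seq_thiele (ω : ℕ → ℝ) (hω0 : ω 0 = 0) (hmono : ∀ i, ω i ≤ ω (i + 1))
    (hω : ω 2 < 2 * ω 1)
    (A : Finset β) (H : Finset (Finset β)) (d : ℕ) (hd : 1 ≤ d)
    (hH : ∀ s ∈ H, s ⊆ A ∧ s.card = d)
    (κ : ℕ) (hκ : 1 ≤ κ)
    (pri : Cand β → ℕ) (hinj : Set.InjOn pri (Cfull κ H : Set (Cand β)))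
    (hpri1 : ∀ s ∈ H, pri (cH s : Cand β) < pri pc)
    (hpri2 : ∀ s ∈ H, ∀ j ∈ Finset.range κ, pri (cH s : Cand β) < pri (Sum.inr (Sum.inl j) : Cand β))
    (hpri3 : ∀ j ∈ Finset.range κ, pri pc < pri (Sum.inr (Sum.inl j) : Cand β)) :
    (∃ H' ⊆ H, H'.card = κ ∧ ∀ s ∈ H', ∀ t ∈ H', s ≠ t → Disjoint s t) ↔
      (∃ H' ⊆ H, H'.card ≤ κ ∧
        pc ∉ seqCommittee ω pri ((votes A H d).map (· ∩ Cfull κ H'))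
              (Cfull κ H') κ) := by
  constructor
  · -- packing exists → control possible
    rintro ⟨P, hPH, hPcard, hPdisj⟩
    refine ⟨P, hPH, le_of_eq hPcard, ?_⟩
    rw [votesR A H P hPH d κ]
    set V' := Multiset.replicate d ({pc} : Finset (Cand β))
        + A.val.map (fun a => (P.filter fun t => a ∈ t).image cH) with hV'
    have claim : ∀ i, i ≤ κ → ∃ S, S ⊆ P ∧ S.card = i ∧
        seqCommittee ω pri V' (Cfull κ P) i = S.image cH := by
      intro i
      induction i with
      | zero => exact fun _ => ⟨∅, Finset.empty_subset _, rfl, by simp [seqCommittee]⟩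
      | succ i ih =>
        intro hi
        obtain ⟨S, hSP, hScard, hSw⟩ := ih (Nat.le_of_succ_le hi)
        have hdisjS : ∀ t₁ ∈ S, ∀ t₂ ∈ S, t₁ ≠ t₂ → Disjoint t₁ t₂ :=
          fun t₁ h₁ t₂ h₂ => hPdisj t₁ (hSP h₁) t₂ (hSP h₂)
        have hPS : (P \ S).Nonempty := by
          rw [Finset.sdiff_nonempty]
          intro hsub
          have := Finset.card_le_card hsub
          omega
        obtain ⟨s, hsPS⟩ := hPS
        have hsD : s ∈ (P \ S).filter fun s => ∀ t ∈ S, Disjoint s t := by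
          refine Finset.mem_filter.mpr ⟨hsPS, fun t ht => ?_⟩
          exact hPdisj s (Finset.mem_sdiff.mp hsPS).1 t (hSP ht)
            (fun h => (Finset.mem_sdiff.mp hsPS).2 (h ▸ ht))
        obtain ⟨s₀, hs₀D, hmin⟩ :=
          Finset.exists_min_image _ (fun s => pri (cH s)) ⟨s, hsD⟩
        have hnext := seqNext_eq_cH ω hω0 hmono hω pri A H P S d hd hH κ hinj hpri1
          hPH hSP hdisjS hs₀D hmin
        have hs₀PS := Finset.mem_sdiff.mp (Finset.mem_filter.mp hs₀D).1
        refine ⟨insert s₀ S, Finset.insert_subset hs₀PS.1 hSP, ?_, ?_⟩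
        · rw [Finset.card_insert_of_notMem hs₀PS.2, hScard]
        · show seqCommittee ω pri V' (Cfull κ P) i
              ∪ seqNext ω pri V' (Cfull κ P) (seqCommittee ω pri V' (Cfull κ P) i)
            = (insert s₀ S).image cH
          rw [hSw, hnext, Finset.union_comm, ← Finset.insert_eq, Finset.image_insert]
    obtain ⟨S, _, _, hSw⟩ := claim κ le_rfl
    rw [hSw]
    exact pc_not_mem_image S
  · -- control possible → packing exists
    rintro ⟨H', hH'H, hcard, hpc⟩
    rw [votesR A H H' hH'H d κ] at hpc
    set V' := Multiset.replicate d ({pc} : Finset (Cand β))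
        + A.val.map (fun a => (H'.filter fun t => a ∈ t).image cH) with hV'
    have claim : ∀ i, i ≤ κ → ∃ S, S ⊆ H' ∧ S.card = i ∧
        (∀ t₁ ∈ S, ∀ t₂ ∈ S, t₁ ≠ t₂ → Disjoint t₁ t₂) ∧
        seqCommittee ω pri V' (Cfull κ H') i = S.image cH := by
      intro i
      induction i with
      | zero =>
        exact fun _ => ⟨∅, Finset.empty_subset _, rfl, by simp, by simp [seqCommittee]⟩
      | succ i ih =>
        intro hi
        obtain ⟨S, hSH', hScard, hdisjS, hSw⟩ := ih (Nat.le_of_succ_le hi)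
        by_cases hD : ((H' \ S).filter fun s => ∀ t ∈ S, Disjoint s t) = ∅
        · exfalso
          have hnext := seqNext_eq_pc ω hω0 hmono hω pri A H H' S d hd hH κ hH'H hSH'
            hdisjS hD
          have hmem : pc ∈ seqCommittee ω pri V' (Cfull κ H') (i + 1) := by
            show pc ∈ seqCommittee ω pri V' (Cfull κ H') i
                ∪ seqNext ω pri V' (Cfull κ H') (seqCommittee ω pri V' (Cfull κ H') i)
            rw [hSw, hnext]
            exact Finset.mem_union_right _ (Finset.mem_singleton_self _)
          exact hpc (seqCommittee_mono ω pri V' (Cfull κ H') hi hmem)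
        · obtain ⟨s₀, hs₀D, hmin⟩ := Finset.exists_min_image _ (fun s => pri (cH s))
            (Finset.nonempty_of_ne_empty hD)
          have hnext := seqNext_eq_cH ω hω0 hmono hω pri A H H' S d hd hH κ hinj hpri1
            hH'H hSH' hdisjS hs₀D hmin
          rcases Finset.mem_filter.mp hs₀D with ⟨hs₀sd, hall⟩
          rcases Finset.mem_sdiff.mp hs₀sd with ⟨hs₀H', hs₀S⟩
          refine ⟨insert s₀ S, Finset.insert_subset hs₀H' hSH', ?_, ?_, ?_⟩
          · rw [Finset.card_insert_of_notMem hs₀S, hScard]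
          · intro t₁ h₁ t₂ h₂ hne
            rcases Finset.mem_insert.mp h₁ with h₁e | h₁ <;>
              rcases Finset.mem_insert.mp h₂ with h₂e | h₂
            · exact absurd (h₁e.trans h₂e.symm) hne
            · rw [h₁e]; exact hall t₂ h₂
            · rw [h₂e]; exact (hall t₁ h₁).symm
            · exact hdisjS t₁ h₁ t₂ h₂ hne
          · show seqCommittee ω pri V' (Cfull κ H') i
                ∪ seqNext ω pri V' (Cfull κ H') (seqCommittee ω pri V' (Cfull κ H') i)
              = (insert s₀ S).image cH
            rw [hSw, hnext, Finset.union_comm, ← Finset.insert_eq, Finset.image_insert]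
    obtain ⟨S, hSH', hScard, hdisjS, _⟩ := claim κ le_rfl
    exact ⟨S, hSH'.trans hH'H, hScard, hdisjS⟩

end Stmt17
end
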